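/- arXiv:2306.13201 — 8 statements merged into one kernel-verified Lean document; each statement's English description precedes it below -/
import Mathlib

section
/- The edge set of the complete graph K_n on n ≥ 2 vertices cannot be partitioned into fewer than n-1 stars, where a star is a set of edges all sharing a common vertex. -/
/-- The edge set of the complete graph on `Fin n`: all non-diagonal unordered pairs. -/
def Kedges (n : ℕ) : Finset (Sym2 (Fin n)) :=
  Finset.univ.filter fun e => ¬ e.IsDiag

/-- `c` is a valid center assignment witnessing that the edge set `E` is a star-forest:
every edge contains its center, and any two distinct edges sharing a vertex are both
centered at that shared vertex (so every connected component is a star). -/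
def IsStarForestOn {n : ℕ} (E : Finset (Sym2 (Fin n))) (c : Sym2 (Fin n) → Fin n) : Prop :=
  (∀ e ∈ E, c e ∈ e) ∧
    ∀ e ∈ E, ∀ f ∈ E, e ≠ f → ∀ v : Fin n, v ∈ e → v ∈ f → c e = v

/-- `E` is (the edge set of) a star-forest. -/
def IsStarForest {n : ℕ} (E : Finset (Sym2 (Fin n))) : Prop :=
  ∃ c, IsStarForestOn E c

/-- `E` is a star-forest with at most `k` edge-containing star components. -/
def IsKStarForest {n : ℕ} (E : Finset (Sym2 (Fin n))) (k : ℕ) : Prop :=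
  ∃ c, IsStarForestOn E c ∧ (E.image c).card ≤ k

/-- `E` is a 2-star-forest with exactly the two designated centers `a` and `b`,
each center having a nonempty star. -/
def IsTwoStar {n : ℕ} (E : Finset (Sym2 (Fin n))) (a b : Fin n) : Prop :=
  ∃ c, IsStarForestOn E c ∧ (∀ e ∈ E, c e = a ∨ c e = b) ∧
    (∃ e ∈ E, c e = a) ∧ (∃ e ∈ E, c e = b)

/-- Combinatorial crossing of two chords of the convex polygon with vertices
`0, 1, …, n-1` in convex (cyclic) position. -/
def Cross {n : ℕ} (e f : Sym2 (Fin n)) : Prop :=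
  ∃ a b c d : Fin n, e = s(a, b) ∧ f = s(c, d) ∧
    ((a < c ∧ c < b ∧ b < d) ∨ (c < a ∧ a < d ∧ d < b))

/-- A plane (crossing-free) star-forest on the convex point set. -/
def PlaneStarForest {n : ℕ} (E : Finset (Sym2 (Fin n))) : Prop :=
  IsStarForest E ∧ ∀ e ∈ E, ∀ f ∈ E, ¬ Cross e f

/-- the edge set of K_n (n ≥ 2) cannot be partitioned into fewer
than n-1 stars (sets of edges all sharing a common vertex). -/
theorem stmt0 (n t : ℕ) (hn : 2 ≤ n) (F : Fin t → Finset (Sym2 (Fin n)))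
    (hstar : ∀ i, ∃ v : Fin n, ∀ e ∈ F i, v ∈ e)
    (hsub : ∀ i, F i ⊆ Kedges n)
    (hdisj : ∀ i j, i ≠ j → Disjoint (F i) (F j))
    (hcover : ∀ e ∈ Kedges n, ∃ i, e ∈ F i) :
    n - 1 ≤ t := by
  choose v hv using hstar
  set S : Finset (Fin n) := Finset.image v Finset.univ with hS
  have hcardS : S.card ≤ t := le_trans (Finset.card_image_le) (by simp)
  have hcompl : Sᶜ.card ≤ 1 := by
    rw [Finset.card_le_one]
    intro a ha b hb
    by_contra hab
    have he : s(a, b) ∈ Kedges n := by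
      simp [Kedges, Sym2.isDiag_iff_proj_eq, hab]
    obtain ⟨i, hi⟩ := hcover _ he
    have := hv i _ hi
    rw [Sym2.mem_iff] at this
    rcases this with h | h
    · exact (Finset.mem_compl.mp ha) (by rw [← h]; exact Finset.mem_image_of_mem v (Finset.mem_univ i))
    · exact (Finset.mem_compl.mp hb) (by rw [← h]; exact Finset.mem_image_of_mem v (Finset.mem_univ i))
  have := Finset.card_compl S
  simp at this
  omega
end

section
/- For every n ≥ 1, the edge set of the complete graph K_n can be partitioned into at most ⌈n/2⌉ + 1 star-forests. -/
def pFun (m : ℕ) {n : ℕ} : Sym2 (Fin n) → ℕ :=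
  Sym2.lift ⟨fun x y =>
    if max x.val y.val - min x.val y.val < m then (min x.val y.val) % m
    else if max x.val y.val - min x.val y.val = m then m
    else (max x.val y.val) % m,
    by intro x y; simp only [min_comm, max_comm]⟩

def cFun (m : ℕ) {n : ℕ} : Sym2 (Fin n) → Fin n :=
  Sym2.lift ⟨fun x y => ⟨if m < max x.val y.val - min x.val y.val
        then max x.val y.val else min x.val y.val, by
      split
      · exact max_lt x.isLt y.isLt
      · exact lt_of_le_of_lt (min_le_left _ _) x.isLt⟩,
    by intro x y; simp only [min_comm, max_comm]⟩

lemma mod2 (m x : ℕ) (h : x < 2*m) : (x < m ∧ x % m = x) ∨ (m ≤ x ∧ x % m = x - m) := by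
  rcases Nat.lt_or_ge x m with h'|h'
  · exact Or.inl ⟨h', Nat.mod_eq_of_lt h'⟩
  · right; refine ⟨h', ?_⟩
    rw [Nat.mod_eq_sub_mod h', Nat.mod_eq_of_lt (by omega)]

lemma key (m a b a' b' v : ℕ) (hm : 1 ≤ m)
    (hb : b < 2*m) (hb' : b' < 2*m) (hab : a < b) (hab' : a' < b')
    (hp : (if b - a < m then a % m else if b - a = m then m else b % m)
        = (if b' - a' < m then a' % m else if b' - a' = m then m else b' % m))
    (hne : ¬(a = a' ∧ b = b'))
    (hv : v = a ∨ v = b) (hv' : v = a' ∨ v = b') :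
    (if m < b - a then b else a) = v := by
  have h1 := mod2 m a (by omega)
  have h2 := mod2 m b hb
  have h3 := mod2 m a' (by omega)
  have h4 := mod2 m b' hb'
  split_ifs at hp ⊢ <;> omega

lemma cmem (m : ℕ) {n : ℕ} (x y : Fin n) : cFun m s(x, y) ∈ s(x, y) := by
  rw [Sym2.mem_iff]
  have h : (cFun m s(x,y)).val = x.val ∨ (cFun m s(x,y)).val = y.val := by
    simp only [cFun, Sym2.lift_mk]
    split <;> omega
  rcases h with h | h
  · exact Or.inl (Fin.ext h)
  · exact Or.inr (Fin.ext h)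

lemma sym2_eq_of_minmax {n : ℕ} (x y x' y' : Fin n)
    (h1 : min x.val y.val = min x'.val y'.val)
    (h2 : max x.val y.val = max x'.val y'.val) :
    s(x,y) = s(x',y') := by
  rw [Sym2.eq_iff]
  simp only [Fin.ext_iff]
  omega

lemma keySym2 (m n : ℕ) (hm : 1 ≤ m) (hn : n ≤ 2*m)
    (e f : Sym2 (Fin n)) (he : ¬ e.IsDiag) (hf : ¬ f.IsDiag)
    (hp : pFun m e = pFun m f) (hne : e ≠ f)
    (v : Fin n) (hv : v ∈ e) (hv' : v ∈ f) : cFun m e = v := by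
  induction e using Sym2.ind with | _ x y => ?_
  induction f using Sym2.ind with | _ x' y' => ?_
  rw [Sym2.mk_isDiag_iff] at he hf
  have hxy : x.val ≠ y.val := fun h => he (Fin.ext h)
  have hxy' : x'.val ≠ y'.val := fun h => hf (Fin.ext h)
  rw [Sym2.mem_iff] at hv hv'
  simp only [pFun, Sym2.lift_mk] at hp
  apply Fin.ext
  have hgoal : (cFun m s(x,y)).val
      = if m < max x.val y.val - min x.val y.val then max x.val y.val
        else min x.val y.val := by
    simp only [cFun, Sym2.lift_mk]
  rw [hgoal]
  apply key m (min x.val y.val) (max x.val y.val) (min x'.val y'.val) (max x'.val y'.val)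
    v.val hm (by have := x.isLt; have := y.isLt; omega)
    (by have := x'.isLt; have := y'.isLt; omega) (by omega) (by omega) hp
  · rintro ⟨h1, h2⟩
    exact hne (sym2_eq_of_minmax x y x' y' h1 h2)
  · rcases hv with h | h <;> rw [h] <;> omega
  · rcases hv' with h | h <;> rw [h] <;> omega

lemma pFun_le (m : ℕ) {n : ℕ} (hm : 1 ≤ m) (e : Sym2 (Fin n)) : pFun m e ≤ m := by
  induction e using Sym2.ind with | _ x y => ?_
  simp only [pFun, Sym2.lift_mk]
  have := Nat.mod_lt (min x.val y.val) hm
  have := Nat.mod_lt (max x.val y.val) hm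
  split_ifs <;> omega

/-- for every n ≥ 1, the edge set of K_n can be partitioned into at
most ⌈n/2⌉ + 1 star-forests (empty parts allowed). -/
theorem stmt1 (n : ℕ) (hn : 1 ≤ n) :
    ∃ F : Fin ((n + 1) / 2 + 1) → Finset (Sym2 (Fin n)),
      (∀ i, IsStarForest (F i)) ∧ (∀ i, F i ⊆ Kedges n) ∧
      (∀ i j, i ≠ j → Disjoint (F i) (F j)) ∧
      (∀ e ∈ Kedges n, ∃ i, e ∈ F i) := by
  set m := (n + 1) / 2 with hmdef
  have hm : 1 ≤ m := by omega
  have hnm : n ≤ 2 * m := by omega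
  refine ⟨fun i => (Kedges n).filter (fun e => pFun m e = i.val), ?_, ?_, ?_, ?_⟩
  · intro i
    refine ⟨cFun m, ?_, ?_⟩
    · intro e he
      induction e using Sym2.ind with | _ x y => exact cmem m x y
    · intro e he f hf hne v hv hv'
      simp only [Finset.mem_filter, Kedges, Finset.mem_univ, true_and] at he hf
      exact keySym2 m n hm hnm e f he.1 hf.1 (he.2.trans hf.2.symm) hne v hv hv'
  · intro i
    exact Finset.filter_subset _ _
  · intro i j hij
    rw [Finset.disjoint_left]
    intro e he hf
    simp only [Finset.mem_filter] at he hf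
    exact hij (Fin.ext (he.2 ▸ hf.2))
  · intro e he
    refine ⟨⟨pFun m e, by have := pFun_le m hm e; omega⟩, ?_⟩
    simp [Finset.mem_filter, he]
end

section
/- For every n > 3, the edge set of the complete graph K_n can be partitioned into ⌈3n/4⌉ 2-star-forests. -/
set_option maxHeartbeats 1600000


def rcol (n a b : ℕ) : ℕ :=
  if 4 * (n/4) ≤ b then
    (if 4 * (n/4) ≤ a then 3*(n/4) + (a - 4*(n/4)) else 3*(n/4) + (b - 4*(n/4)))
  else if a/4 = b/4 then
    3*(a/4) + (if b = a+1 then a % 2 else if b = a+2 then 2 else 1)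
  else if a % 4 = b % 4 then 3*(b/4) + b % 2
  else 3*(a/4) + (if 2 ≤ a % 4 then a % 2 else if b % 4 = a % 4 + 2 then a % 4 else 2)

def rctr (n a b : ℕ) : ℕ :=
  if 4 * (n/4) ≤ b then (if 4 * (n/4) ≤ a then a else b)
  else if a/4 = b/4 then (if b = a+3 ∧ a % 4 = 0 then b else a)
  else if a % 4 = b % 4 then b else a

def D (n a b i c : ℕ) : Prop :=
  (4*(n/4) ≤ b ∧ 3*(n/4) ≤ i ∧
     ((4*(n/4) ≤ a ∧ c = a ∧ i = 3*(n/4) + (a-4*(n/4))) ∨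
      (a < 4*(n/4) ∧ c = b ∧ i = 3*(n/4) + (b-4*(n/4))))) ∨
  (b < 4*(n/4) ∧ a/4 = b/4 ∧ i < 3*(n/4) ∧ i/3 = a/4 ∧
     ((b = a+1 ∧ c = a ∧ i = 3*(a/4) + a%2) ∨
      (b = a+2 ∧ c = a ∧ i = 3*(a/4) + 2) ∨
      (b = a+3 ∧ c = b ∧ i = 3*(a/4) + 1))) ∨
  (b < 4*(n/4) ∧ ¬(a/4 = b/4) ∧ a%4 = b%4 ∧ c = b ∧ i < 3*(n/4) ∧ i/3 = b/4 ∧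
     i = 3*(b/4) + b%2) ∨
  (b < 4*(n/4) ∧ ¬(a/4 = b/4) ∧ ¬(a%4 = b%4) ∧ c = a ∧ i < 3*(n/4) ∧ i/3 = a/4 ∧
     ((2 ≤ a%4 ∧ i = 3*(a/4) + a%2) ∨
      (a%4 < 2 ∧ b%4 = a%4+2 ∧ i = 3*(a/4) + a%4) ∨
      (a%4 < 2 ∧ ¬(b%4 = a%4+2) ∧ i = 3*(a/4)+2)))

lemma rspec (n a b : ℕ) (hab : a < b) (hb : b < n) : D n a b (rcol n a b) (rctr n a b) := by
  unfold rcol rctr D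
  split_ifs <;>
    first
      | exact Or.inl ⟨by omega, by omega, Or.inl (by omega)⟩
      | exact Or.inl ⟨by omega, by omega, Or.inr (by omega)⟩
      | exact Or.inr (Or.inl (by omega))
      | exact Or.inr (Or.inr (Or.inl (by omega)))
      | exact Or.inr (Or.inr (Or.inr (by omega)))

lemma rctr_mem (n a b : ℕ) : rctr n a b = a ∨ rctr n a b = b := by
  unfold rctr; split_ifs <;> simp

lemma rcol_lt (n a b : ℕ) (h : a ≤ b) (hb : b < n) :
    rcol n a b < 3*(n/4) + n%4 := by
  unfold rcol; split_ifs <;> omega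

lemma key_s2 (n a b a2 b2 v : ℕ) (hab : a < b) (hab2 : a2 < b2)
    (hb : b < n) (hb2 : b2 < n)
    (hcol : rcol n a b = rcol n a2 b2) (hne : ¬(a = a2 ∧ b = b2))
    (hv1 : v = a ∨ v = b) (hv2 : v = a2 ∨ v = b2) :
    rctr n a b = v := by
  have h1 := rspec n a b hab hb
  have h2 := rspec n a2 b2 hab2 hb2
  unfold D at h1 h2
  rcases h1 with h1|h1|h1|h1 <;> rcases h2 with h2|h2|h2|h2 <;> omega

def rc1 (n i : ℕ) : ℕ :=
  if i < 3*(n/4) then 4*(i/3) + (if i % 3 = 1 then 1 else 0)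
  else 4*(n/4) + (i - 3*(n/4))

def rc2 (n i : ℕ) : ℕ :=
  if i < 3*(n/4) then 4*(i/3) + (if i % 3 = 0 then 2 else if i % 3 = 1 then 3 else 1)
  else 4*(n/4) + (i - 3*(n/4))

lemma rc1_lt (n i : ℕ) (hi : i < 3*(n/4) + n%4) : rc1 n i < n := by
  unfold rc1; split_ifs <;> omega

lemma rc2_lt (n i : ℕ) (hi : i < 3*(n/4) + n%4) : rc2 n i < n := by
  unfold rc2; split_ifs <;> omega

lemma ctr_class (n a b i : ℕ) (hab : a < b) (hb : b < n) (hi : rcol n a b = i) :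
    rctr n a b = rc1 n i ∨ rctr n a b = rc2 n i := by
  have h1 := rspec n a b hab hb
  unfold D at h1
  unfold rc1 rc2
  split_ifs <;> rcases h1 with h1|h1|h1|h1 <;> omega

noncomputable def gg (n : ℕ) : Sym2 (Fin n) → ℕ :=
  Sym2.lift ⟨fun x y => rcol n (x ⊓ y).val (x ⊔ y).val,
    fun x y => by dsimp only; rw [inf_comm x y, sup_comm x y]⟩

noncomputable def cF (n : ℕ) : Sym2 (Fin n) → Fin n :=
  Sym2.lift ⟨fun x y =>
      if rctr n (x ⊓ y).val (x ⊔ y).val = (x ⊓ y).val then x ⊓ y else x ⊔ y,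
    fun x y => by dsimp only; rw [inf_comm x y, sup_comm x y]⟩

lemma exists_rep {n : ℕ} (e : Sym2 (Fin n)) (hd : ¬ e.IsDiag) :
    ∃ a b : Fin n, a.val < b.val ∧ e = s(a, b) := by
  induction e using Sym2.ind with
  | _ x y =>
    rcases lt_trichotomy x y with h | h | h
    · exact ⟨x, y, h, rfl⟩
    · exact absurd (Sym2.mk_isDiag_iff.mpr h) hd
    · exact ⟨y, x, h, Sym2.eq_swap⟩

lemma gg_mk {n : ℕ} {a b : Fin n} (h : a.val ≤ b.val) :
    gg n s(a, b) = rcol n a.val b.val := by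
  have hf : a ≤ b := h
  simp only [gg, Sym2.lift_mk, inf_eq_left.mpr hf, sup_eq_right.mpr hf]

lemma cF_val {n : ℕ} {a b : Fin n} (h : a.val ≤ b.val) :
    (cF n s(a, b)).val = rctr n a.val b.val := by
  have hf : a ≤ b := h
  simp only [cF, Sym2.lift_mk, inf_eq_left.mpr hf, sup_eq_right.mpr hf]
  split_ifs with h'
  · exact h'.symm
  · rcases rctr_mem n a.val b.val with h'' | h''
    · exact absurd h'' h'
    · exact h''.symm

/-- for every n > 3, the edge set of K_n can be partitioned into
⌈3n/4⌉ 2-star-forests. -/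
theorem stmt2 (n : ℕ) (hn : 3 < n) :
    ∃ F : Fin ((3 * n + 3) / 4) → Finset (Sym2 (Fin n)),
      (∀ i, IsKStarForest (F i) 2) ∧ (∀ i, F i ⊆ Kedges n) ∧
      (∀ i j, i ≠ j → Disjoint (F i) (F j)) ∧
      (∀ e ∈ Kedges n, ∃ i, e ∈ F i) := by
  have hK : (3 * n + 3) / 4 = 3*(n/4) + n%4 := by omega
  refine ⟨fun i => (Kedges n).filter fun e => gg n e = i.val, ?_, ?_, ?_, ?_⟩
  · intro i
    have hilt : i.val < 3*(n/4) + n%4 := hK ▸ i.isLt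
    refine ⟨cF n, ⟨?_, ?_⟩, ?_⟩
    · intro e he
      rw [Finset.mem_filter] at he
      have hd : ¬ e.IsDiag := (Finset.mem_filter.mp he.1).2
      obtain ⟨a, b, hab, rfl⟩ := exists_rep e hd
      have hv := cF_val hab.le
      rcases rctr_mem n a.val b.val with h | h
      · have : cF n s(a, b) = a := Fin.val_injective (by rw [hv, h])
        rw [this]; exact Sym2.mem_mk_left a b
      · have : cF n s(a, b) = b := Fin.val_injective (by rw [hv, h])
        rw [this]; exact Sym2.mem_mk_right a b
    · intro e he f hf hef v hve hvf
      rw [Finset.mem_filter] at he hf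
      have hde : ¬ e.IsDiag := (Finset.mem_filter.mp he.1).2
      have hdf : ¬ f.IsDiag := (Finset.mem_filter.mp hf.1).2
      obtain ⟨a, b, hab, rfl⟩ := exists_rep e hde
      obtain ⟨a2, b2, hab2, rfl⟩ := exists_rep f hdf
      have hcol : rcol n a.val b.val = rcol n a2.val b2.val := by
        rw [← gg_mk hab.le, ← gg_mk hab2.le, he.2, hf.2]
      have hne : ¬(a.val = a2.val ∧ b.val = b2.val) := by
        rintro ⟨h1, h2⟩
        exact hef (by rw [Fin.val_injective h1, Fin.val_injective h2])
      have hv1 : v.val = a.val ∨ v.val = b.val := by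
        rcases Sym2.mem_iff.mp hve with h | h <;> [left; right] <;> rw [h]
      have hv2 : v.val = a2.val ∨ v.val = b2.val := by
        rcases Sym2.mem_iff.mp hvf with h | h <;> [left; right] <;> rw [h]
      have hk := key_s2 n a.val b.val a2.val b2.val v.val hab hab2 b.isLt b2.isLt hcol hne hv1 hv2
      exact Fin.val_injective (by rw [cF_val hab.le, hk])
    · have hsub : ((Kedges n).filter fun e => gg n e = i.val).image (cF n) ⊆
          {⟨rc1 n i.val, rc1_lt n i.val hilt⟩, ⟨rc2 n i.val, rc2_lt n i.val hilt⟩} := by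
        intro x hx
        rw [Finset.mem_image] at hx
        obtain ⟨e, he, rfl⟩ := hx
        rw [Finset.mem_filter] at he
        have hd : ¬ e.IsDiag := (Finset.mem_filter.mp he.1).2
        obtain ⟨a, b, hab, rfl⟩ := exists_rep e hd
        have hi : rcol n a.val b.val = i.val := by rw [← gg_mk hab.le]; exact he.2
        rcases ctr_class n a.val b.val i.val hab b.isLt hi with h | h <;>
          rw [Finset.mem_insert, Finset.mem_singleton]
        · exact Or.inl (Fin.val_injective (by rw [cF_val hab.le, h]))
        · exact Or.inr (Fin.val_injective (by rw [cF_val hab.le, h]))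
      exact (Finset.card_le_card hsub).trans
        ((Finset.card_insert_le _ _).trans (by simp))
  · intro i
    exact Finset.filter_subset _ _
  · intro i j hij
    refine Finset.disjoint_left.mpr fun e he1 he2 => ?_
    rw [Finset.mem_filter] at he1 he2
    exact hij (Fin.val_injective (he1.2 ▸ he2.2))
  · intro e he
    have hd : ¬ e.IsDiag := (Finset.mem_filter.mp he).2
    obtain ⟨a, b, hab, rfl⟩ := exists_rep e hd
    refine ⟨⟨rcol n a.val b.val, ?_⟩, ?_⟩
    · rw [hK]; exact rcol_lt n a.val b.val hab.le b.isLt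
    · rw [Finset.mem_filter]
      exact ⟨he, gg_mk hab.le⟩
end

section
/- For every n > 3, the edge set of the complete graph K_n cannot be covered by fewer than ⌈3n/4⌉ 2-star-forests. -/
/-- for every n > 3, the edge set of K_n cannot be covered by fewer
than ⌈3n/4⌉ 2-star-forests. -/
theorem stmt3 (n t : ℕ) (hn : 3 < n) (F : Fin t → Finset (Sym2 (Fin n)))
    (h2 : ∀ i, IsKStarForest (F i) 2)
    (hsub : ∀ i, F i ⊆ Kedges n)
    (hcover : ∀ e ∈ Kedges n, ∃ i, e ∈ F i) :
    (3 * n + 3) / 4 ≤ t := by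
  classical
  by_cases htbig : n - 1 ≤ t
  · omega
  push_neg at htbig
  suffices hmain : 3 * n ≤ 4 * t by omega
  choose c hc hcard using h2
  set C : Fin t → Finset (Fin n) := fun i => (F i).image (c i) with hCdef
  set M : Fin n → Finset (Fin t) := fun v => Finset.univ.filter (fun i => v ∈ C i) with hMdef
  set m : Fin n → ℕ := fun v => (M v).card with hmdef
  have hmval : ∀ v, m v = (M v).card := fun v => by rw [hmdef]
  have hMmem : ∀ (v : Fin n) (i : Fin t), i ∈ M v ↔ v ∈ C i := by
    intro v i; simp [hMdef]
  have hCcard : ∀ i, (C i).card ≤ 2 := hcard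
  have hcov : ∀ u v : Fin n, u ≠ v → ∃ i, s(u, v) ∈ F i := by
    intro u v huv
    apply hcover
    simp [Kedges, Sym2.mk_isDiag_iff, huv]
  have hcenter : ∀ (i : Fin t) (e : Sym2 (Fin n)), e ∈ F i → c i e ∈ e :=
    fun i e he => (hc i).1 e he
  have hshare : ∀ (i : Fin t) (e f : Sym2 (Fin n)), e ∈ F i → f ∈ F i → e ≠ f →
      ∀ v : Fin n, v ∈ e → v ∈ f → c i e = v := fun i e f' he hf => (hc i).2 e he f' hf
  have hCmem : ∀ (i : Fin t) (e : Sym2 (Fin n)), e ∈ F i → c i e ∈ C i := by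
    intro i e he; exact Finset.mem_image_of_mem _ he
  -- two distinct centers of a forest are not joined by an edge of that forest
  have hno_edge : ∀ (i : Fin t) (x y : Fin n), x ∈ C i → y ∈ C i → x ≠ y → s(x, y) ∉ F i := by
    intro i x y hx hy hxy hmem
    obtain ⟨ex, hexF, hexc⟩ := Finset.mem_image.mp hx
    obtain ⟨ey, heyF, heyc⟩ := Finset.mem_image.mp hy
    have hcx := hcenter i _ hmem
    rw [Sym2.mem_iff] at hcx
    rcases hcx with h1 | h1
    · have hyin : y ∈ ey := by rw [← heyc]; exact hcenter i ey heyF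
      have hne : s(x, y) ≠ ey := by
        intro h; rw [h, heyc] at h1; exact hxy h1.symm
      have h2 := hshare i _ _ hmem heyF hne y (by simp) hyin
      rw [h1] at h2; exact hxy h2
    · have hxin : x ∈ ex := by rw [← hexc]; exact hcenter i ex hexF
      have hne : s(x, y) ≠ ex := by
        intro h; rw [h, hexc] at h1; exact hxy h1
      have h2 := hshare i _ _ hmem hexF hne x (by simp) hxin
      rw [h1] at h2; exact hxy h2.symm
  -- t is positive
  have hne01 : (⟨0, by omega⟩ : Fin n) ≠ (⟨1, by omega⟩ : Fin n) := by
    intro h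
    have h2 := congrArg Fin.val h
    simp at h2
  have htpos : 0 < t := by
    obtain ⟨i0, _⟩ := hcov _ _ hne01
    exact i0.pos
  -- every vertex is a center of some forest
  have hmpos : ∀ v, 0 < m v := by
    intro v
    by_contra hcon
    push_neg at hcon
    have hMv : M v = ∅ := Finset.card_eq_zero.mp (by rw [← hmval]; omega)
    have hnotC : ∀ i, v ∉ C i := by
      intro i hvC
      have : i ∈ M v := (hMmem v i).mpr hvC
      rw [hMv] at this; simp at this
    have hg : ∀ u : Fin n, ∃ k : Fin t, u ≠ v → s(u, v) ∈ F k := by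
      intro u
      by_cases huv : u = v
      · exact ⟨⟨0, htpos⟩, fun h => absurd huv h⟩
      · obtain ⟨k, hk⟩ := hcov u v huv
        exact ⟨k, fun _ => hk⟩
    choose g hgp using hg
    have hinj : Set.InjOn g (Finset.univ.filter (· ≠ v) : Finset (Fin n)) := by
      intro u hu u' hu' hgu
      simp only [Finset.coe_filter, Set.mem_setOf_eq, Finset.mem_univ, true_and] at hu hu'
      by_contra hne
      have h1 : s(u, v) ∈ F (g u) := hgp u hu
      have h2 : s(u', v) ∈ F (g u) := by rw [hgu]; exact hgp u' hu'
      have hedne : s(u, v) ≠ s(u', v) := by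
        intro h; rw [Sym2.eq_iff] at h
        rcases h with ⟨h3, _⟩ | ⟨h3, h4⟩
        · exact hne h3
        · exact hu h3
      have h3 := hshare (g u) _ _ h1 h2 hedne v (by simp) (by simp)
      exact hnotC (g u) (h3 ▸ hCmem _ _ h1)
    have hcardle := Finset.card_le_card_of_injOn g
      (fun u _ => Finset.mem_univ (g u)) hinj
    rw [Finset.filter_ne', Finset.card_erase_of_mem (Finset.mem_univ v)] at hcardle
    simp only [Finset.card_univ, Fintype.card_fin] at hcardle
    omega
  have hMne : ∀ v, (M v).Nonempty := fun v => Finset.card_pos.mp (by rw [← hmval]; exact hmpos v)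
  set f : Fin n → Fin t := fun v => (M v).min' (hMne v) with hfdef
  have hfM : ∀ v, v ∈ C (f v) := fun v => (hMmem v _).mp (Finset.min'_mem _ _)
  have hfuniq : ∀ (v : Fin n) (i : Fin t), m v = 1 → v ∈ C i → i = f v := by
    intro v i h1 hvC
    have hi : i ∈ M v := (hMmem v i).mpr hvC
    have hfi : f v ∈ M v := Finset.min'_mem _ _
    rw [hmval] at h1
    obtain ⟨x, hx⟩ := Finset.card_eq_one.mp h1
    rw [hx, Finset.mem_singleton] at hi hfi
    rw [hi, hfi]
  -- a forest cannot have three distinct centers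
  have hthree : ∀ (i : Fin t) (x y z : Fin n), x ∈ C i → y ∈ C i → z ∈ C i →
      x ≠ y → x ≠ z → y ≠ z → False := by
    intro i x y z hx hy hz hxy hxz hyz
    have hsub : ({x, y, z} : Finset (Fin n)) ⊆ C i := by
      intro a ha
      simp only [Finset.mem_insert, Finset.mem_singleton] at ha
      rcases ha with h | h | h <;> subst h <;> assumption
    have hcard3 : ({x, y, z} : Finset (Fin n)).card = 3 := by
      rw [Finset.card_insert_of_notMem (by simp [hxy, hxz]),
        Finset.card_insert_of_notMem (by simp [hyz]), Finset.card_singleton]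
    have := Finset.card_le_card hsub
    have := hCcard i
    omega
  -- L1: two vertices each centering exactly one forest cannot co-center a forest
  have hL1 : ∀ (u w : Fin n) (i : Fin t), u ≠ w → m u = 1 → m w = 1 →
      u ∈ C i → w ∈ C i → False := by
    intro u w i huw hu hw huC hwC
    obtain ⟨k, hk⟩ := hcov u w huw
    have hck := hcenter k _ hk
    rw [Sym2.mem_iff] at hck
    rcases hck with h | h
    · have hk1 : k = f u := hfuniq u k hu (h ▸ hCmem k _ hk)
      have hk2 : i = f u := hfuniq u i hu huC
      rw [hk1, ← hk2] at hk
      exact hno_edge i u w huC hwC huw hk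
    · have hk1 : k = f w := hfuniq w k hw (h ▸ hCmem k _ hk)
      have hk2 : i = f w := hfuniq w i hw hwC
      rw [hk1, ← hk2] at hk
      exact hno_edge i u w huC hwC huw hk
  -- L2: a vertex centering exactly two forests cannot be co-centered with two
  -- distinct vertices that each center exactly one forest
  have hL2 : ∀ (u1 u2 w : Fin n), u1 ≠ u2 → u1 ≠ w → u2 ≠ w →
      m u1 = 1 → m u2 = 1 → m w = 2 → w ∈ C (f u1) → w ∈ C (f u2) → False := by
    intro u1 u2 w h12 h1w h2w hm1 hm2 hmw hw1 hw2
    have hu1C : u1 ∈ C (f u1) := hfM u1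
    have hu2C : u2 ∈ C (f u2) := hfM u2
    have hi12 : f u1 ≠ f u2 := by
      intro h
      exact hthree (f u1) u1 u2 w hu1C (h ▸ hu2C) hw1 h12 h1w h2w
    have hMw : M w = {f u1, f u2} := by
      have hsub : ({f u1, f u2} : Finset (Fin t)) ⊆ M w := by
        intro k hk
        simp only [Finset.mem_insert, Finset.mem_singleton] at hk
        rcases hk with h | h <;> subst h
        · exact (hMmem w _).mpr hw1
        · exact (hMmem w _).mpr hw2
      have hc2 : ({f u1, f u2} : Finset (Fin t)).card = 2 := by
        rw [Finset.card_insert_of_notMem (by simp [hi12]), Finset.card_singleton]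
      exact (Finset.eq_of_subset_of_card_le hsub (by rw [hc2, ← hmval w]; omega)).symm
    have key : ∀ (a : Fin n) (ia ib : Fin t), a ≠ w → m a = 1 → a ∈ C ia → w ∈ C ia →
        M w = {ia, ib} → ia = f a → s(a, w) ∈ F ib ∧ c ib s(a, w) = w := by
      intro a ia ib haw hma haC hwC hMw' hiafa
      obtain ⟨k, hk⟩ := hcov a w haw
      have hck := hcenter k _ hk
      rw [Sym2.mem_iff] at hck
      rcases hck with h | h
      · exfalso
        have hk1 : k = f a := hfuniq a k hma (h ▸ hCmem k _ hk)
        rw [hk1, ← hiafa] at hk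
        exact hno_edge ia a w haC hwC haw hk
      · have hkMw : k ∈ M w := (hMmem w k).mpr (h ▸ hCmem k _ hk)
        rw [hMw'] at hkMw
        simp only [Finset.mem_insert, Finset.mem_singleton] at hkMw
        rcases hkMw with h' | h'
        · exfalso; subst h'; exact hno_edge k a w haC hwC haw hk
        · subst h'; exact ⟨hk, h⟩
    obtain ⟨he1, hc1⟩ := key u1 (f u1) (f u2) h1w hm1 hu1C hw1 hMw rfl
    obtain ⟨he2, hc2⟩ := key u2 (f u2) (f u1) h2w hm2 hu2C hw2 (by rw [hMw, Finset.pair_comm]) rfl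
    obtain ⟨k, hk⟩ := hcov u1 u2 h12
    have hck := hcenter k _ hk
    rw [Sym2.mem_iff] at hck
    rcases hck with h | h
    · have hk1 : k = f u1 := hfuniq u1 k hm1 (h ▸ hCmem k _ hk)
      rw [hk1] at hk h
      have hedne : s(u1, u2) ≠ s(u2, w) := by
        intro heq; rw [Sym2.eq_iff] at heq
        rcases heq with ⟨h3, h4⟩ | ⟨h3, h4⟩
        · exact h12 h3
        · exact h1w h3
      have h4 := hshare (f u1) _ _ hk he2 hedne u2 (by simp) (by simp)
      rw [h] at h4; exact h12 h4
    · have hk1 : k = f u2 := hfuniq u2 k hm2 (h ▸ hCmem k _ hk)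
      rw [hk1] at hk h
      have hedne : s(u1, u2) ≠ s(u1, w) := by
        intro heq; rw [Sym2.eq_iff] at heq
        rcases heq with ⟨h3, h4⟩ | ⟨h3, h4⟩
        · exact h2w h4
        · exact h12 h4.symm
      have h4 := hshare (f u2) _ _ hk he1 hedne u1 (by simp) (by simp)
      rw [h] at h4; exact h12 h4.symm
  -- counting
  set Afin : Finset (Fin n) := Finset.univ.filter (fun u => m u = 1) with hAdef
  set A1 : Finset (Fin n) := Afin.filter (fun u => 2 ≤ (C (f u)).card) with hA1def
  set A2 : Finset (Fin n) := Afin.filter (fun u => ¬ 2 ≤ (C (f u)).card) with hA2def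
  set Bb2 : Finset (Fin n) := Finset.univ.filter (fun u => m u = 2) with hB2def
  set Bb3 : Finset (Fin n) := Finset.univ.filter (fun u => 3 ≤ m u) with hB3def
  set P : ℕ := ∑ w ∈ Bb3, m w with hPdef
  have hacard : Afin.card = ∑ v, (if m v = 1 then 1 else 0) := Finset.card_filter _ _
  have hb2card : Bb2.card = ∑ v, (if m v = 2 then 1 else 0) := Finset.card_filter _ _
  have hb3card : Bb3.card = ∑ v, (if 3 ≤ m v then 1 else 0) := Finset.card_filter _ _
  have hsplit1 : ∀ v : Fin n, (if m v = 1 then 1 else 0) +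
      ((if m v = 2 then 1 else 0) + (if 3 ≤ m v then 1 else 0)) = 1 := by
    intro v; have := hmpos v; split_ifs <;> omega
  have h6 : Afin.card + (Bb2.card + Bb3.card) = n := by
    rw [hacard, hb2card, hb3card, ← Finset.sum_add_distrib, ← Finset.sum_add_distrib,
      Finset.sum_congr rfl (fun v _ => hsplit1 v)]
    simp
  have hS2 : ∑ v, m v = ∑ i, (C i).card := by
    have h1 : ∀ v, m v = ∑ i, (if v ∈ C i then 1 else 0) := by
      intro v; rw [hmval]; exact Finset.card_filter _ _
    rw [Finset.sum_congr rfl (fun v _ => h1 v), Finset.sum_comm]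
    apply Finset.sum_congr rfl
    intro i _
    rw [← Finset.card_filter]
    congr 1
    simp
  have hPsum : P = ∑ v, (if 3 ≤ m v then m v else 0) := by
    rw [hPdef, hB3def]; exact Finset.sum_filter _ _
  have hb2sum : 2 * Bb2.card = ∑ v, (if m v = 2 then 2 else 0) := by
    rw [hb2card, Finset.mul_sum]
    apply Finset.sum_congr rfl; intro v _; split_ifs <;> ring
  have hsplit2 : ∀ v : Fin n, m v = (if m v = 1 then 1 else 0) +
      ((if m v = 2 then 2 else 0) + (if 3 ≤ m v then m v else 0)) := by
    intro v; have := hmpos v; split_ifs <;> omega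
  have hSdec : ∑ v, m v = Afin.card + (2 * Bb2.card + P) := by
    rw [hacard, hb2sum, hPsum, ← Finset.sum_add_distrib, ← Finset.sum_add_distrib]
    exact Finset.sum_congr rfl (fun v _ => hsplit2 v)
  have hP3 : 3 * Bb3.card ≤ P := by
    rw [hPdef]
    calc 3 * Bb3.card = ∑ _w ∈ Bb3, 3 := by rw [Finset.sum_const, smul_eq_mul, mul_comm]
    _ ≤ ∑ w ∈ Bb3, m w := Finset.sum_le_sum (fun w hw => by
        rw [hB3def, Finset.mem_filter] at hw; exact hw.2)
  set q : ℕ := (Finset.univ.filter (fun i : Fin t => (C i).card ≤ 1)).card with hqdef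
  have hqsum : q = ∑ i, (if (C i).card ≤ 1 then 1 else 0) := Finset.card_filter _ _
  have h1a : (∑ i, (C i).card) + q ≤ 2 * t := by
    rw [hqsum, ← Finset.sum_add_distrib]
    calc ∑ i, ((C i).card + if (C i).card ≤ 1 then 1 else 0) ≤ ∑ _i : Fin t, 2 :=
      Finset.sum_le_sum (fun i _ => by have := hCcard i; split_ifs <;> omega)
    _ = 2 * t := by rw [Finset.sum_const]; simp [mul_comm]
  have hA2mem : ∀ u ∈ A2, m u = 1 ∧ (C (f u)).card ≤ 1 := by
    intro u hu
    rw [hA2def, Finset.mem_filter, hAdef, Finset.mem_filter] at hu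
    exact ⟨hu.1.2, by omega⟩
  have h1b : A2.card ≤ q := by
    rw [hqdef]
    apply Finset.card_le_card_of_injOn f
    · intro u hu
      rw [Finset.mem_coe, Finset.mem_filter]
      exact ⟨Finset.mem_univ _, (hA2mem u hu).2⟩
    · intro u hu u' hu' hff
      have hu1 : u ∈ C (f u) := hfM u
      have hu2 : u' ∈ C (f u) := hff ▸ hfM u'
      exact Finset.card_le_one.mp (hA2mem u (Finset.mem_coe.mp hu)).2 u hu1 u' hu2
  have h2' : A1.card + A2.card = Afin.card := by
    rw [hA1def, hA2def]
    exact Finset.card_filter_add_card_filter_not _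
  set W : Fin n → Fin n := fun u =>
    if h : ((C (f u)).erase u).Nonempty then ((C (f u)).erase u).min' h else u with hWdef
  have hA1mem : ∀ u ∈ A1, m u = 1 ∧ 2 ≤ (C (f u)).card := by
    intro u hu
    rw [hA1def, Finset.mem_filter, hAdef, Finset.mem_filter] at hu
    exact ⟨hu.1.2, hu.2⟩
  have hWmem : ∀ u ∈ A1, W u ∈ C (f u) ∧ W u ≠ u := by
    intro u hu
    have hcu := (hA1mem u hu).2
    have hne : ((C (f u)).erase u).Nonempty := by
      rw [← Finset.card_pos, Finset.card_erase_of_mem (hfM u)]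
      omega
    have hWval : W u = ((C (f u)).erase u).min' hne := by
      rw [hWdef]; exact dif_pos hne
    have hmem := Finset.min'_mem _ hne
    rw [← hWval, Finset.mem_erase] at hmem
    exact ⟨hmem.2, hmem.1⟩
  have hfib : A1.card = ∑ w, (A1.filter fun u => W u = w).card :=
    Finset.card_eq_sum_card_fiberwise (fun u _ => Finset.mem_univ (W u))
  have hfible : ∀ w : Fin n, (A1.filter fun u => W u = w).card ≤
      (if 3 ≤ m w then m w else if m w = 2 then 1 else 0) := by
    intro w
    by_cases h3 : 3 ≤ m w
    · rw [if_pos h3]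
      have hle : (A1.filter fun u => W u = w).card ≤ (M w).card := by
        apply Finset.card_le_card_of_injOn f
        · intro u hu
          rw [Finset.mem_coe, Finset.mem_filter] at hu
          obtain ⟨hu1, hWu⟩ := hu
          have := (hWmem u hu1).1
          rw [hWu] at this
          exact (hMmem w (f u)).mpr this
        · intro u hu u' hu' hff
          rw [Finset.mem_coe, Finset.mem_filter] at hu hu'
          obtain ⟨hu1, hWu⟩ := hu
          obtain ⟨hu'1, hWu'⟩ := hu'
          by_contra hneq
          have hw1 : w ∈ C (f u) := hWu ▸ (hWmem u hu1).1
          have hw2 : u' ∈ C (f u) := hff ▸ hfM u'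
          have hnuw : u ≠ w := fun h => (hWmem u hu1).2 (hWu.trans h.symm)
          have hnu'w : u' ≠ w := fun h => (hWmem u' hu'1).2 (hWu'.trans h.symm)
          exact hthree (f u) u u' w (hfM u) hw2 hw1 hneq hnuw hnu'w
      rw [hmval]
      exact hle
    · rw [if_neg h3]
      by_cases h2c : m w = 2
      · rw [if_pos h2c]
        rw [Finset.card_le_one]
        intro u hu u' hu'
        rw [Finset.mem_filter] at hu hu'
        obtain ⟨hu1, hWu⟩ := hu
        obtain ⟨hu'1, hWu'⟩ := hu'
        by_contra hneq
        have hw1 : w ∈ C (f u) := hWu ▸ (hWmem u hu1).1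
        have hw2 : w ∈ C (f u') := hWu' ▸ (hWmem u' hu'1).1
        have hnuw : u ≠ w := fun h => (hWmem u hu1).2 (hWu.trans h.symm)
        have hnu'w : u' ≠ w := fun h => (hWmem u' hu'1).2 (hWu'.trans h.symm)
        exact hL2 u u' w hneq hnuw hnu'w (hA1mem u hu1).1 (hA1mem u' hu'1).1 h2c hw1 hw2
      · rw [if_neg h2c, Nat.le_zero, Finset.card_eq_zero, Finset.eq_empty_iff_forall_notMem]
        intro u hu
        rw [Finset.mem_filter] at hu
        obtain ⟨hu1, hWu⟩ := hu
        have hw1 : w ∈ C (f u) := hWu ▸ (hWmem u hu1).1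
        have hnuw : u ≠ w := fun h => (hWmem u hu1).2 (hWu.trans h.symm)
        have hmw1 : m w = 1 := by
          have hfuMw : f u ∈ M w := (hMmem w _).mpr hw1
          have hpos : 0 < (M w).card := Finset.card_pos.mpr ⟨f u, hfuMw⟩
          rw [hmval] at h3 h2c ⊢
          omega
        exact hL1 u w (f u) hnuw (hA1mem u hu1).1 hmw1 (hfM u) hw1
  have hgb : ∀ w : Fin n, (if 3 ≤ m w then m w else if m w = 2 then 1 else 0) =
      (if 3 ≤ m w then m w else 0) + (if m w = 2 then 1 else 0) := by
    intro w; split_ifs <;> omega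
  have hfinal1 : A1.card ≤ P + Bb2.card := by
    rw [hfib]
    calc ∑ w, (A1.filter fun u => W u = w).card
        ≤ ∑ w, (if 3 ≤ m w then m w else if m w = 2 then 1 else 0) :=
          Finset.sum_le_sum (fun w _ => hfible w)
    _ = P + Bb2.card := by
          rw [Finset.sum_congr rfl (fun w _ => hgb w), Finset.sum_add_distrib,
            ← hPsum, ← hb2card]
  omega
end

section
/- Suppose the edge set of K_n is covered by a family of 2-star-forests, each with two designated centers, and form the auxiliary graph G joining the centers of each member. If {u1, u2, u3} is a connected component of G consisting of exactly the two edges u1u2 and u1u3, then at least one of the three edges of K_n among u1, u2, u3 is not covered by the family, a contradiction; hence G has no component with exactly two edges of this form. -/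
/-- If some edge of `E` is centered at `x`, every edge of `E` containing `x` is
centered at `x`. -/
lemma center_forced {n : ℕ} {E : Finset (Sym2 (Fin n))} {c : Sym2 (Fin n) → Fin n}
    (h : IsStarForestOn E c) {x : Fin n} (hx : ∃ p ∈ E, c p = x)
    {e : Sym2 (Fin n)} (he : e ∈ E) (hxe : x ∈ e) : c e = x := by
  obtain ⟨p, hp, hcp⟩ := hx
  by_cases hep : e = p
  · rw [hep]; exact hcp
  · exact h.2 e he p hp hep x hxe (hcp ▸ h.1 p hp)

/-- in a covering of K_n by 2-star-forests with two designated centers each,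
the auxiliary graph has no component on {u1, u2, u3} consisting of exactly the two
edges u1u2 and u1u3: that situation is contradictory. -/
theorem stmt9 (n t : ℕ) (F : Fin t → Finset (Sym2 (Fin n)))
    (a b : Fin t → Fin n) (hab : ∀ i, a i ≠ b i)
    (h2 : ∀ i, IsTwoStar (F i) (a i) (b i))
    (hsub : ∀ i, F i ⊆ Kedges n)
    (hcover : ∀ e ∈ Kedges n, ∃ i, e ∈ F i)
    (u1 u2 u3 : Fin n) (h12 : u1 ≠ u2) (h13 : u1 ≠ u3) (h23 : u2 ≠ u3)
    (i1 i2 : Fin t)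
    (hi1 : ({a i1, b i1} : Finset (Fin n)) = {u1, u2})
    (hi2 : ({a i2, b i2} : Finset (Fin n)) = {u1, u3})
    (hcomp : ∀ i, (a i ∈ ({u1, u2, u3} : Finset (Fin n)) ∨
        b i ∈ ({u1, u2, u3} : Finset (Fin n))) → i = i1 ∨ i = i2) :
    False := by
  obtain ⟨c1, hsf1, hc1, hA1, hB1⟩ := h2 i1
  obtain ⟨c2, hsf2, hc2, hA2, hB2⟩ := h2 i2
  -- u1, u2 are the centers of i1; u1, u3 are the centers of i2
  have hu1m1 : u1 ∈ ({a i1, b i1} : Finset (Fin n)) := by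
    rw [hi1]; simp
  have hu2m1 : u2 ∈ ({a i1, b i1} : Finset (Fin n)) := by
    rw [hi1]; simp
  have hu1m2 : u1 ∈ ({a i2, b i2} : Finset (Fin n)) := by
    rw [hi2]; simp
  have hu3m2 : u3 ∈ ({a i2, b i2} : Finset (Fin n)) := by
    rw [hi2]; simp
  have key1 : ∀ x : Fin n, x ∈ ({a i1, b i1} : Finset (Fin n)) →
      ∀ e ∈ F i1, x ∈ e → c1 e = x := by
    intro x hx e he hxe
    simp only [Finset.mem_insert, Finset.mem_singleton] at hx
    rcases hx with hx | hx
    · exact center_forced hsf1 (hx ▸ hA1) he hxe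
    · exact center_forced hsf1 (hx ▸ hB1) he hxe
  have key2 : ∀ x : Fin n, x ∈ ({a i2, b i2} : Finset (Fin n)) →
      ∀ e ∈ F i2, x ∈ e → c2 e = x := by
    intro x hx e he hxe
    simp only [Finset.mem_insert, Finset.mem_singleton] at hx
    rcases hx with hx | hx
    · exact center_forced hsf2 (hx ▸ hA2) he hxe
    · exact center_forced hsf2 (hx ▸ hB2) he hxe
  -- each edge among u1,u2,u3 is covered, and only by i1 or i2
  have hedge : ∀ x y : Fin n, x ≠ y → x ∈ ({u1, u2, u3} : Finset (Fin n)) →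
      y ∈ ({u1, u2, u3} : Finset (Fin n)) → s(x, y) ∈ F i1 ∨ s(x, y) ∈ F i2 := by
    intro x y hxy hx hy
    have hK : s(x, y) ∈ Kedges n := by
      simp [Kedges, Sym2.isDiag_iff_proj_eq, hxy]
    obtain ⟨i, hi⟩ := hcover _ hK
    obtain ⟨c, hsf, hc, _, _⟩ := h2 i
    have hce : c s(x, y) ∈ s(x, y) := hsf.1 _ hi
    have hcm : c s(x, y) ∈ ({u1, u2, u3} : Finset (Fin n)) := by
      rcases Sym2.mem_iff.mp hce with h | h
      · rw [h]; exact hx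
      · rw [h]; exact hy
    have : i = i1 ∨ i = i2 := by
      apply hcomp
      rcases hc _ hi with h | h
      · left; rwa [h] at hcm
      · right; rwa [h] at hcm
    rcases this with h | h
    · left; rwa [h] at hi
    · right; rwa [h] at hi
  have mu1 : u1 ∈ ({u1, u2, u3} : Finset (Fin n)) := by simp
  have mu2 : u2 ∈ ({u1, u2, u3} : Finset (Fin n)) := by simp
  have mu3 : u3 ∈ ({u1, u2, u3} : Finset (Fin n)) := by simp
  -- s(u1,u2) ∉ F i1 (it contains both centers of i1)
  have h12n1 : s(u1, u2) ∉ F i1 := by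
    intro h
    have e1 := key1 u1 hu1m1 _ h (Sym2.mem_mk_left _ _)
    have e2 := key1 u2 hu2m1 _ h (Sym2.mem_mk_right _ _)
    exact h12 (e1 ▸ e2)
  have h13n2 : s(u1, u3) ∉ F i2 := by
    intro h
    have e1 := key2 u1 hu1m2 _ h (Sym2.mem_mk_left _ _)
    have e2 := key2 u3 hu3m2 _ h (Sym2.mem_mk_right _ _)
    exact h13 (e1 ▸ e2)
  have h12in2 : s(u1, u2) ∈ F i2 := by
    rcases hedge u1 u2 h12 mu1 mu2 with h | h
    · exact absurd h h12n1
    · exact h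
  have h13in1 : s(u1, u3) ∈ F i1 := by
    rcases hedge u1 u3 h13 mu1 mu3 with h | h
    · exact h
    · exact absurd h h13n2
  have hne1 : s(u2, u3) ≠ s(u1, u3) := by
    intro h
    rw [Sym2.eq_iff] at h
    rcases h with ⟨h, _⟩ | ⟨h, _⟩
    · exact h12 h.symm
    · exact h23 h
  have hne2 : s(u2, u3) ≠ s(u1, u2) := by
    intro h
    rw [Sym2.eq_iff] at h
    rcases h with ⟨h, _⟩ | ⟨_, h⟩
    · exact h12 h.symm
    · exact h13 h.symm
  rcases hedge u2 u3 h23 mu2 mu3 with h | h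
  · -- s(u2,u3) ∈ F i1 : centered at u2, but shares u3 with s(u1,u3) centered at u1
    have e1 := key1 u2 hu2m1 _ h (Sym2.mem_mk_left _ _)
    have e2 := hsf1.2 _ h _ h13in1 hne1 u3 (Sym2.mem_mk_right _ _) (Sym2.mem_mk_right _ _)
    exact h23 (e1 ▸ e2)
  · -- s(u2,u3) ∈ F i2 : centered at u3, but shares u2 with s(u1,u2) centered at u1
    have e1 := key2 u3 hu3m2 _ h (Sym2.mem_mk_right _ _)
    have e2 := hsf2.2 _ h _ h12in2 hne2 u2 (Sym2.mem_mk_left _ _) (Sym2.mem_mk_right _ _)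
    exact h23 (e2 ▸ e1 : u2 = u3)
end

section
/- For every even n = 2t with t ≥ 1 and every k ≥ 2, the edge set of K_n can be covered by n/2 + ⌈n/(2k)⌉ k-star-forests. -/
namespace Stmt10Aux
open Fin.NatCast

def starF (n : ℕ) [NeZero n] (x : Fin n) (m : ℕ) : Finset (Sym2 (Fin n)) :=
  (Finset.range m).image fun d => s(x, x + ((d+1 : ℕ) : Fin n))

lemma mem_starF {n : ℕ} [NeZero n] {x : Fin n} {m : ℕ} {e : Sym2 (Fin n)} :
    e ∈ starF n x m ↔ ∃ d < m, e = s(x, x + ((d+1 : ℕ) : Fin n)) := by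
  simp [starF, eq_comm]

lemma natCast_val {n : ℕ} [NeZero n] (a : ℕ) (h : a < n) : ((a : Fin n)).val = a := by
  simp [Fin.val_natCast, Nat.mod_eq_of_lt h]

lemma natCast_inj {n : ℕ} [NeZero n] {a b : ℕ} (ha : a < n) (hb : b < n)
    (h : (a : Fin n) = (b : Fin n)) : a = b := by
  have := congrArg Fin.val h
  rwa [natCast_val a ha, natCast_val b hb] at this

lemma add_cast_inj {n : ℕ} [NeZero n] {x : Fin n} {a b : ℕ} (ha : a < n) (hb : b < n)
    (h : x + (a : Fin n) = x + (b : Fin n)) : a = b :=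
  natCast_inj ha hb (add_left_cancel h)

/-- core disjointness : within Fin (2t), x + a ≠ x + (t + b) for a,b < t -/
lemma no_overlap {t : ℕ} [NeZero (2*t)] {x : Fin (2*t)} {a b : ℕ} (ha : a < t) (hb : b < t) :
    x + (a : Fin (2*t)) ≠ x + ((t + b : ℕ) : Fin (2*t)) := by
  intro h
  have := add_cast_inj (by omega) (by omega) h
  omega

lemma add_cast_ne_self {n : ℕ} [NeZero n] {x : Fin n} {a : ℕ} (h1 : 1 ≤ a) (h2 : a < n) :
    x ≠ x + (a : Fin n) := by
  intro h
  have h' : (a : Fin n) = ((0 : ℕ) : Fin n) := by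
    have := left_eq_add.mp h
    simpa using this
  have := natCast_inj h2 (by omega : 0 < n) h'
  omega

section TwoStar
variable {t k : ℕ} [NeZero (2*t)]

def twoStar (t : ℕ) [NeZero (2*t)] (i : ℕ) : Finset (Sym2 (Fin (2*t))) :=
  starF (2*t) ((i : ℕ) : Fin (2*t)) (t-1)
    ∪ starF (2*t) (((i : ℕ) : Fin (2*t)) + ((t : ℕ) : Fin (2*t))) (t-1)

/-- every vertex of an edge of star 1 is c1 + a with a < t -/
lemma vertex_star1 (ht : 1 ≤ t) {c1 : Fin (2*t)} {e : Sym2 (Fin (2*t))} {v : Fin (2*t)}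
    (he : e ∈ starF (2*t) c1 (t-1)) (hv : v ∈ e) : ∃ a < t, v = c1 + ((a : ℕ) : Fin (2*t)) := by
  obtain ⟨d, hd, rfl⟩ := mem_starF.mp he
  rcases Sym2.mem_iff.mp hv with h | h
  · exact ⟨0, by omega, by simp [h]⟩
  · exact ⟨d+1, by omega, h⟩

/-- every vertex of an edge of star 2 is c1 + (t + b) with b < t -/
lemma vertex_star2 (ht : 1 ≤ t) {c1 : Fin (2*t)} {e : Sym2 (Fin (2*t))} {v : Fin (2*t)}
    (he : e ∈ starF (2*t) (c1 + ((t : ℕ) : Fin (2*t))) (t-1)) (hv : v ∈ e) :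
    ∃ b < t, v = c1 + (((t + b : ℕ)) : Fin (2*t)) := by
  obtain ⟨d, hd, rfl⟩ := mem_starF.mp he
  rcases Sym2.mem_iff.mp hv with h | h
  · exact ⟨0, by omega, by simp [h]⟩
  · refine ⟨d+1, by omega, ?_⟩
    rw [h]
    push_cast
    abel

lemma vdisj (ht : 1 ≤ t) {c1 : Fin (2*t)} {e f : Sym2 (Fin (2*t))} {v : Fin (2*t)}
    (he : e ∈ starF (2*t) c1 (t-1)) (hv : v ∈ e)
    (hf : f ∈ starF (2*t) (c1 + ((t : ℕ) : Fin (2*t))) (t-1)) (hv' : v ∈ f) : False := by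
  obtain ⟨a, ha, rfl⟩ := vertex_star1 ht he hv
  obtain ⟨b, hb, hh⟩ := vertex_star2 ht hf hv'
  exact no_overlap ha hb hh

lemma star_disj (ht : 1 ≤ t) {c1 : Fin (2*t)} {e : Sym2 (Fin (2*t))}
    (he : e ∈ starF (2*t) c1 (t-1))
    (hf : e ∈ starF (2*t) (c1 + ((t : ℕ) : Fin (2*t))) (t-1)) : False := by
  obtain ⟨d, hd, rfl⟩ := mem_starF.mp hf
  exact vdisj ht he (Sym2.mem_mk_left _ _) hf (Sym2.mem_mk_left _ _)

lemma twoStar_isK (ht : 1 ≤ t) (hk : 2 ≤ k) (i : ℕ) : IsKStarForest (twoStar t i) k := by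
  classical
  set c1 : Fin (2*t) := ((i : ℕ) : Fin (2*t)) with hc1
  set c2 : Fin (2*t) := c1 + ((t : ℕ) : Fin (2*t)) with hc2
  refine ⟨fun e => if e ∈ starF (2*t) c1 (t-1) then c1 else c2, ⟨?_, ?_⟩, ?_⟩
  · intro e he
    rcases Finset.mem_union.mp he with h | h
    · dsimp only; rw [if_pos h]
      obtain ⟨d, hd, rfl⟩ := mem_starF.mp h
      exact Sym2.mem_mk_left _ _
    · dsimp only; rw [if_neg (fun h1 => star_disj ht h1 h)]
      obtain ⟨d, hd, rfl⟩ := mem_starF.mp h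
      exact Sym2.mem_mk_left _ _
  · intro e he f hf hef v hve hvf
    rcases Finset.mem_union.mp he with h | h
    · dsimp only; rw [if_pos h]
      rcases Finset.mem_union.mp hf with h' | h'
      · obtain ⟨a, ha, rfl⟩ := mem_starF.mp h
        obtain ⟨b, hb, rfl⟩ := mem_starF.mp h'
        rcases Sym2.mem_iff.mp hve with rfl | rfl
        · rfl
        · rcases Sym2.mem_iff.mp hvf with h2 | h2
          · exact h2.symm
          · exact absurd (by rw [h2]) hef
      · exact absurd (vdisj ht h hve h' hvf) (fun x => x)
    · dsimp only; rw [if_neg (fun h1 => star_disj ht h1 h)]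
      rcases Finset.mem_union.mp hf with h' | h'
      · exact absurd (vdisj ht h' hvf h hve) (fun x => x)
      · obtain ⟨a, ha, rfl⟩ := mem_starF.mp h
        obtain ⟨b, hb, rfl⟩ := mem_starF.mp h'
        rcases Sym2.mem_iff.mp hve with rfl | rfl
        · rfl
        · rcases Sym2.mem_iff.mp hvf with h2 | h2
          · exact h2.symm
          · exact absurd (by rw [h2]) hef
  · calc ((twoStar t i).image _).card ≤ ({c1, c2} : Finset (Fin (2*t))).card := by
          apply Finset.card_le_card
          intro v hv
          obtain ⟨e, _, rfl⟩ := Finset.mem_image.mp hv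
          by_cases h : e ∈ starF (2*t) c1 (t-1) <;> simp [h]
      _ ≤ 2 := Finset.card_insert_le _ _ |>.trans (by simp)
      _ ≤ k := hk

lemma twoStar_subset (ht : 1 ≤ t) (i : ℕ) : twoStar t i ⊆ Kedges (2*t) := by
  intro e he
  have : ¬ e.IsDiag := by
    rcases Finset.mem_union.mp he with h | h <;>
    · obtain ⟨d, hd, rfl⟩ := mem_starF.mp h
      rw [Sym2.mk_isDiag_iff]
      exact add_cast_ne_self (by omega) (by omega)
  simp [Kedges, this]

end TwoStar

section Match
variable {t k : ℕ} [NeZero (2*t)]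

def matchF (t k j : ℕ) [NeZero (2*t)] : Finset (Sym2 (Fin (2*t))) :=
  (((Finset.range t).filter fun x => x / k = j).image
    fun x => s(((x : ℕ) : Fin (2*t)), ((x + t : ℕ) : Fin (2*t))))

def minC (t : ℕ) [NeZero (2*t)] : Sym2 (Fin (2*t)) → Fin (2*t) :=
  Sym2.lift ⟨fun a b => min a b, fun a b => min_comm a b⟩

lemma mem_matchF {j : ℕ} {e : Sym2 (Fin (2*t))} :
    e ∈ matchF t k j ↔ ∃ x, x < t ∧ x / k = j ∧ e = s(((x : ℕ) : Fin (2*t)), ((x + t : ℕ) : Fin (2*t))) := by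
  simp [matchF, eq_comm, and_assoc]

lemma matchF_isK (ht : 1 ≤ t) (hk : 2 ≤ k) (j : ℕ) : IsKStarForest (matchF t k j) k := by
  classical
  refine ⟨minC t, ⟨?_, ?_⟩, ?_⟩
  · intro e he
    obtain ⟨x, hx, -, rfl⟩ := mem_matchF.mp he
    have hval : (((x : ℕ) : Fin (2*t))).val = x := natCast_val x (by omega)
    have hval' : (((x + t : ℕ) : Fin (2*t))).val = x + t := natCast_val _ (by omega)
    have hmin : min (((x : ℕ) : Fin (2*t))) (((x + t : ℕ) : Fin (2*t))) = ((x : ℕ) : Fin (2*t)) := by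
      apply min_eq_left
      rw [Fin.le_def, hval, hval']
      omega
    simp only [minC, Sym2.lift_mk, hmin]
    exact Sym2.mem_mk_left _ _
  · intro e he f hf hef v hve hvf
    obtain ⟨x, hx, hxj, rfl⟩ := mem_matchF.mp he
    obtain ⟨y, hy, hyj, rfl⟩ := mem_matchF.mp hf
    have hxy : x ≠ y := by
      rintro rfl; exact hef rfl
    exfalso
    have h1 := natCast_val (n := 2*t) x (by omega)
    have h2 := natCast_val (n := 2*t) (x+t) (by omega)
    have h3 := natCast_val (n := 2*t) y (by omega)
    have h4 := natCast_val (n := 2*t) (y+t) (by omega)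
    rcases Sym2.mem_iff.mp hve with rfl | rfl <;>
      rcases Sym2.mem_iff.mp hvf with h5 | h5 <;>
      · have := congrArg Fin.val h5
        omega
  · calc ((matchF t k j).image (minC t)).card
        ≤ ((Finset.range t).filter fun x => x / k = j).card := by
          rw [matchF, Finset.image_image]
          exact Finset.card_image_le
      _ ≤ (Finset.Ico (j*k) (j*k+k)).card := by
          apply Finset.card_le_card
          intro x hx
          simp only [Finset.mem_filter, Finset.mem_range] at hx
          have hdm : k * j + x % k = x := by rw [← hx.2]; exact Nat.div_add_mod x k
          have hmod : x % k < k := Nat.mod_lt _ (by omega)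
          rw [Finset.mem_Ico, Nat.mul_comm j k]
          omega
      _ ≤ k := by
          rw [Nat.card_Ico]
          omega

lemma matchF_subset (ht : 1 ≤ t) (j : ℕ) : matchF t k j ⊆ Kedges (2*t) := by
  intro e he
  obtain ⟨x, hx, -, rfl⟩ := mem_matchF.mp he
  have : ¬ (s(((x : ℕ) : Fin (2*t)), ((x + t : ℕ) : Fin (2*t)))).IsDiag := by
    rw [Sym2.mk_isDiag_iff]
    intro h
    have := congrArg Fin.val h
    rw [natCast_val x (by omega), natCast_val (x+t) (by omega)] at this
    omega
  simp only [Kedges, Finset.mem_filter, Finset.mem_univ, true_and]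
  exact this

end Match

section Cover
variable {t k : ℕ} [NeZero (2*t)]

lemma cast_add_cast {n : ℕ} [NeZero n] (p q : ℕ) :
    ((p : Fin n)) + (q : Fin n) = ((p + q : ℕ) : Fin n) := (Nat.cast_add p q).symm

lemma cast_of_val {n : ℕ} [NeZero n] {x : Fin n} {p : ℕ} (h : x.val = p) :
    ((p : ℕ) : Fin n) = x := by
  rw [← h]; exact Fin.cast_val_eq_self x

lemma cast_wrap (p : ℕ) : ((p + 2*t : ℕ) : Fin (2*t)) = ((p : ℕ) : Fin (2*t)) := by
  rw [Nat.cast_add]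
  have : ((2*t : ℕ) : Fin (2*t)) = 0 := by
    apply Fin.ext
    simp [Fin.val_natCast]
  rw [this, add_zero]

lemma cover_aux (ht : 1 ≤ t) (hk : 2 ≤ k) {a b : Fin (2*t)} (hab : a.val < b.val) :
    (∃ i < t, s(a,b) ∈ twoStar t i) ∨ (∃ j < (t+k-1)/k, s(a,b) ∈ matchF t k j) := by
  have hb2 : b.val < 2*t := b.isLt
  set u := a.val with hu
  set v := b.val with hv
  set d := v - u with hd
  have hd1 : 1 ≤ d := by omega
  rcases lt_trichotomy d t with hdt | hdt | hdt
  · -- short chord, goes into a two-star forest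
    left
    by_cases hut : u < t
    · refine ⟨u, hut, Finset.mem_union_left _ (mem_starF.mpr ⟨d - 1, by omega, ?_⟩)⟩
      have h1 : ((u : ℕ) : Fin (2*t)) = a := cast_of_val rfl
      have h2 : ((u : ℕ) : Fin (2*t)) + ((d - 1 + 1 : ℕ) : Fin (2*t)) = b := by
        rw [cast_add_cast, show u + (d - 1 + 1) = v from by omega]
        exact cast_of_val rfl
      rw [h2, h1]
    · refine ⟨u - t, by omega, Finset.mem_union_right _ (mem_starF.mpr ⟨d - 1, by omega, ?_⟩)⟩
      have h1 : ((u - t : ℕ) : Fin (2*t)) + ((t : ℕ) : Fin (2*t)) = a := by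
        rw [cast_add_cast, show u - t + t = u from by omega]
        exact cast_of_val rfl
      have h2 : ((u - t : ℕ) : Fin (2*t)) + ((t : ℕ) : Fin (2*t)) + ((d - 1 + 1 : ℕ) : Fin (2*t)) = b := by
        rw [h1, ← Fin.cast_val_eq_self a, ← hu, cast_add_cast,
          show u + (d - 1 + 1) = v from by omega]
        exact cast_of_val rfl
      rw [h2, h1]
  · -- matching edge
    right
    have hut : u < t := by omega
    refine ⟨u / k, ?_, mem_matchF.mpr ⟨u, hut, rfl, ?_⟩⟩
    · have e1 : (t + k - 1) / k = (t-1)/k + 1 := by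
        rw [show t + k - 1 = (t-1) + k from by omega, Nat.add_div_right _ (by omega)]
      have e2 : u / k ≤ (t-1)/k := Nat.div_le_div_right (by omega)
      omega
    · have h1 : ((u : ℕ) : Fin (2*t)) = a := cast_of_val rfl
      have h2 : ((u + t : ℕ) : Fin (2*t)) = b := cast_of_val (by omega)
      rw [h1, h2]
  · -- long chord: use the star centered at b
    left
    have hvt : t ≤ v := by omega
    refine ⟨v - t, by omega, Finset.mem_union_right _ (mem_starF.mpr ⟨2*t - d - 1, by omega, ?_⟩)⟩
    have h1 : ((v - t : ℕ) : Fin (2*t)) + ((t : ℕ) : Fin (2*t)) = b := by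
      rw [cast_add_cast, show v - t + t = v from by omega]
      exact cast_of_val rfl
    have h2 : ((v - t : ℕ) : Fin (2*t)) + ((t : ℕ) : Fin (2*t)) + ((2*t - d - 1 + 1 : ℕ) : Fin (2*t)) = a := by
      rw [h1, ← Fin.cast_val_eq_self b, ← hv, cast_add_cast,
        show v + (2*t - d - 1 + 1) = u + 2*t from by omega, cast_wrap]
      exact cast_of_val rfl
    rw [h2, h1, Sym2.eq_swap]

end Cover
end Stmt10Aux

/-- for n = 2t (t ≥ 1) and k ≥ 2, the edge set of K_n can be covered
by n/2 + ⌈n/(2k)⌉ k-star-forests. -/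
theorem stmt10 (t k : ℕ) (ht : 1 ≤ t) (hk : 2 ≤ k) :
    ∃ F : Fin (t + (t + k - 1) / k) → Finset (Sym2 (Fin (2 * t))),
      (∀ i, IsKStarForest (F i) k ∧ F i ⊆ Kedges (2 * t)) ∧
      ∀ e ∈ Kedges (2 * t), ∃ i, e ∈ F i := by
  haveI : NeZero (2*t) := ⟨by omega⟩
  classical
  refine ⟨fun i => if i.val < t then Stmt10Aux.twoStar t i.val
      else Stmt10Aux.matchF t k (i.val - t), ?_, ?_⟩
  · intro i
    by_cases h : i.val < t
    · dsimp only
      rw [if_pos h]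
      exact ⟨Stmt10Aux.twoStar_isK ht hk _, Stmt10Aux.twoStar_subset ht _⟩
    · dsimp only
      rw [if_neg h]
      exact ⟨Stmt10Aux.matchF_isK ht hk _, Stmt10Aux.matchF_subset ht _⟩
  · intro e he
    induction e using Sym2.ind with
    | _ a b =>
      have hab : a ≠ b := by
        simp only [Kedges, Finset.mem_filter, Finset.mem_univ, true_and,
          Sym2.mk_isDiag_iff] at he
        exact he
      have key : (∃ i < t, s(a,b) ∈ Stmt10Aux.twoStar t i) ∨
          (∃ j < (t+k-1)/k, s(a,b) ∈ Stmt10Aux.matchF t k j) := by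
        rcases lt_or_gt_of_ne (fun h => hab (Fin.ext h) : a.val ≠ b.val) with h | h
        · exact Stmt10Aux.cover_aux ht hk h
        · rw [Sym2.eq_swap]
          exact Stmt10Aux.cover_aux ht hk h
      rcases key with ⟨i, hi, hm⟩ | ⟨j, hj, hm⟩
      · refine ⟨⟨i, Nat.lt_add_right _ hi⟩, ?_⟩
        dsimp only
        rw [if_pos hi]
        exact hm
      · refine ⟨⟨t + j, Nat.add_lt_add_left hj t⟩, ?_⟩
        dsimp only
        rw [if_neg (by omega), Nat.add_sub_cancel_left]
        exact hm
end

section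
/- Let n be divisible by 4, and partition the vertex set of K_n into four sets V_1, V_2, V_3, V_4 each of size n/4. Then K_n can be covered by 3n/4 subgraphs, each of which is a vertex-disjoint union of two stars: for each u in V_2 with a bijection f: V_2 → V_1, a forest with star centered at u covering edges to V_2 ∪ V_3 and star centered at f(u) covering edges to V_1 ∪ V_4; and two analogous families. -/
lemma doubleStar {n : ℕ} (a b : Fin n) (La Lb : Finset (Fin n))
    (hab : a ≠ b) (haLa : a ∉ La) (hbLb : b ∉ Lb) (haLb : a ∉ Lb) (hbLa : b ∉ La)
    (hd : Disjoint La Lb) :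
    IsKStarForest (La.image (fun w => s(a, w)) ∪ Lb.image (fun w => s(b, w))) 2 ∧
      (La.image (fun w => s(a, w)) ∪ Lb.image (fun w => s(b, w))) ⊆ Kedges n := by
  have hmem : ∀ e ∈ (La.image (fun w => s(a, w)) ∪ Lb.image (fun w => s(b, w))),
      (∃ w ∈ La, e = s(a, w)) ∨ (∃ w ∈ Lb, e = s(b, w)) := by
    intro e he
    simp only [Finset.mem_union, Finset.mem_image] at he
    rcases he with ⟨w, hw, rfl⟩ | ⟨w, hw, rfl⟩
    · exact Or.inl ⟨w, hw, rfl⟩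
    · exact Or.inr ⟨w, hw, rfl⟩
  have hanb : ∀ w ∈ Lb, a ∉ s(b, w) := by
    intro w hw
    simp only [Sym2.mem_iff]
    push_neg
    exact ⟨hab, fun h => haLb (h ▸ hw)⟩
  constructor
  · refine ⟨fun e => if a ∈ e then a else b, ⟨?_, ?_⟩, ?_⟩
    · intro e he
      rcases hmem e he with ⟨w, hw, rfl⟩ | ⟨w, hw, rfl⟩
      · simp
      · simp [hanb w hw]
    · intro e he f hf hef v hve hvf
      rcases hmem e he with ⟨w, hw, rfl⟩ | ⟨w, hw, rfl⟩ <;>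
        rcases hmem f hf with ⟨x, hx, rfl⟩ | ⟨x, hx, rfl⟩ <;>
        simp only [Sym2.mem_iff] at hve hvf
      · rcases hve with rfl | rfl
        · simp
        · rcases hvf with rfl | rfl
          · exact absurd hw haLa
          · exact absurd rfl hef
      · rcases hve with rfl | rfl <;> rcases hvf with rfl | rfl
        · exact absurd rfl hab
        · exact absurd hx haLb
        · exact absurd hw hbLa
        · exact absurd hx (Finset.disjoint_left.mp hd hw)
      · rcases hve with rfl | rfl <;> rcases hvf with rfl | rfl
        · exact absurd rfl (Ne.symm hab)
        · exact absurd hx hbLa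
        · exact absurd hw haLb
        · exact absurd hx (Finset.disjoint_left.mp hd.symm hw)
      · rcases hve with rfl | rfl
        · simp [hanb w hw]
        · rcases hvf with rfl | rfl
          · exact absurd hw hbLb
          · exact absurd rfl hef
    · have hsub : ((La.image (fun w => s(a, w)) ∪ Lb.image (fun w => s(b, w))).image
          (fun e => if a ∈ e then a else b)) ⊆ {a, b} := by
        intro y hy
        simp only [Finset.mem_image] at hy
        obtain ⟨e, _, rfl⟩ := hy
        by_cases h : a ∈ e <;> simp [h]
      exact (Finset.card_le_card hsub).trans (by rw [Finset.card_pair hab])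
  · intro e he
    have hnd : ¬ e.IsDiag := by
      rcases hmem e he with ⟨w, hw, rfl⟩ | ⟨w, hw, rfl⟩
      · simp only [Sym2.mk_isDiag_iff]
        exact fun h => haLa (h ▸ hw)
      · simp only [Sym2.mk_isDiag_iff]
        exact fun h => hbLb (h ▸ hw)
    simp [Kedges, hnd]

/-- if n is divisible by 4 and the vertex set of K_n is partitioned
into four sets of size n/4, then K_n can be covered by 3n/4 subgraphs, each a
vertex-disjoint union of at most two stars (a 2-star-forest). -/
theorem stmt12 (m : ℕ) (V : Fin 4 → Finset (Fin (4 * m)))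
    (hdisj : ∀ i j, i ≠ j → Disjoint (V i) (V j))
    (hunion : ∀ v, ∃ i, v ∈ V i)
    (hcard : ∀ i, (V i).card = m) :
    ∃ F : Fin (3 * m) → Finset (Sym2 (Fin (4 * m))),
      (∀ i, IsKStarForest (F i) 2 ∧ F i ⊆ Kedges (4 * m)) ∧
      ∀ e ∈ Kedges (4 * m), ∃ i, e ∈ F i := by
  classical
  set σ : (i : Fin 4) → Fin m → Fin (4 * m) := fun i => (V i).orderEmbOfFin (hcard i) with hσ
  have hσmem : ∀ i k, σ i k ∈ V i := fun i k => (V i).orderEmbOfFin_mem (hcard i) k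
  have hσsurj : ∀ i, ∀ u ∈ V i, ∃ k, σ i k = u := by
    intro i u hu
    have h := (V i).range_orderEmbOfFin (hcard i)
    have : u ∈ Set.range ((V i).orderEmbOfFin (hcard i)) := by
      rw [h]; exact hu
    exact this
  have hVd : ∀ {i j : Fin 4} {x}, x ∈ V i → x ∈ V j → i = j := by
    intro i j x hxi hxj
    by_contra h
    exact (Finset.disjoint_left.mp (hdisj i j h) hxi) hxj
  set G : Fin 3 → Fin m → Finset (Sym2 (Fin (4 * m))) := fun t k =>
    ![((V 1).erase (σ 1 k) ∪ V 2).image (fun w => s(σ 1 k, w)) ∪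
        ((V 0).erase (σ 0 k) ∪ V 3).image (fun w => s(σ 0 k, w)),
      ((V 3).erase (σ 3 k) ∪ V 1).image (fun w => s(σ 3 k, w)) ∪
        ((V 2).erase (σ 2 k) ∪ V 0).image (fun w => s(σ 2 k, w)),
      (V 1).image (fun w => s(σ 0 k, w)) ∪ (V 3).image (fun w => s(σ 2 k, w))] t with hG
  have hGood : ∀ (t : Fin 3) (k : Fin m), IsKStarForest (G t k) 2 ∧ G t k ⊆ Kedges (4 * m) := by
    intro t k
    fin_cases t <;>
      simp only [hG, Fin.zero_eta, Fin.mk_one, Matrix.cons_val_zero, Matrix.cons_val_one,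
        Matrix.head_cons, Matrix.cons_val_two, Matrix.tail_cons]
    · refine doubleStar _ _ _ _ ?_ ?_ ?_ ?_ ?_ ?_
      · intro h
        have := hVd (hσmem 1 k) (h ▸ hσmem 0 k)
        simp at this
      · simp only [Finset.mem_union, Finset.mem_erase, not_or]
        exact ⟨fun h => h.1 rfl, fun h => by simpa using hVd (hσmem 1 k) h⟩
      · simp only [Finset.mem_union, Finset.mem_erase, not_or]
        exact ⟨fun h => h.1 rfl, fun h => by simpa using hVd (hσmem 0 k) h⟩
      · simp only [Finset.mem_union, Finset.mem_erase, not_or]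
        exact ⟨fun h => by simpa using hVd (hσmem 1 k) h.2,
               fun h => by simpa using hVd (hσmem 1 k) h⟩
      · simp only [Finset.mem_union, Finset.mem_erase, not_or]
        exact ⟨fun h => by simpa using hVd (hσmem 0 k) h.2,
               fun h => by simpa using hVd (hσmem 0 k) h⟩
      · rw [Finset.disjoint_left]
        intro x hx hx'
        simp only [Finset.mem_union, Finset.mem_erase] at hx hx'
        rcases hx with h1 | h1 <;> rcases hx' with h2 | h2
        · simpa using hVd h1.2 h2.2
        · simpa using hVd h1.2 h2
        · simpa using hVd h1 h2.2
        · simpa using hVd h1 h2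
    · refine doubleStar _ _ _ _ ?_ ?_ ?_ ?_ ?_ ?_
      · intro h
        have := hVd (hσmem 3 k) (h ▸ hσmem 2 k)
        simp at this
      · simp only [Finset.mem_union, Finset.mem_erase, not_or]
        exact ⟨fun h => h.1 rfl, fun h => by simpa using hVd (hσmem 3 k) h⟩
      · simp only [Finset.mem_union, Finset.mem_erase, not_or]
        exact ⟨fun h => h.1 rfl, fun h => by simpa using hVd (hσmem 2 k) h⟩
      · simp only [Finset.mem_union, Finset.mem_erase, not_or]
        exact ⟨fun h => by simpa using hVd (hσmem 3 k) h.2,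
               fun h => by simpa using hVd (hσmem 3 k) h⟩
      · simp only [Finset.mem_union, Finset.mem_erase, not_or]
        exact ⟨fun h => by simpa using hVd (hσmem 2 k) h.2,
               fun h => by simpa using hVd (hσmem 2 k) h⟩
      · rw [Finset.disjoint_left]
        intro x hx hx'
        simp only [Finset.mem_union, Finset.mem_erase] at hx hx'
        rcases hx with h1 | h1 <;> rcases hx' with h2 | h2
        · simpa using hVd h1.2 h2.2
        · simpa using hVd h1.2 h2
        · simpa using hVd h1 h2.2
        · simpa using hVd h1 h2
    · refine doubleStar _ _ _ _ ?_ ?_ ?_ ?_ ?_ ?_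
      · intro h
        have := hVd (hσmem 0 k) (h ▸ hσmem 2 k)
        simp at this
      · intro h; simpa using hVd (hσmem 0 k) h
      · intro h; simpa using hVd (hσmem 2 k) h
      · intro h; simpa using hVd (hσmem 0 k) h
      · intro h; simpa using hVd (hσmem 2 k) h
      · rw [Finset.disjoint_left]
        intro x hx hx'
        simpa using hVd hx hx'
  refine ⟨fun i => G (finProdFinEquiv.symm i).1 (finProdFinEquiv.symm i).2, fun i => hGood _ _, ?_⟩
  have hF : ∀ (t : Fin 3) (k : Fin m),
      ∃ i : Fin (3 * m), G ((finProdFinEquiv.symm i).1) ((finProdFinEquiv.symm i).2) = G t k := by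
    intro t k
    exact ⟨finProdFinEquiv (t, k), by rw [Equiv.symm_apply_apply]⟩
  have hA1 : ∀ u w, u ∈ V 1 → w ∈ (V 1).erase u ∪ V 2 →
      ∃ i : Fin (3 * m), s(u, w) ∈ G ((finProdFinEquiv.symm i).1) ((finProdFinEquiv.symm i).2) := by
    intro u w hu hw
    obtain ⟨k, hk⟩ := hσsurj 1 u hu
    subst hk
    obtain ⟨i, hi⟩ := hF 0 k
    refine ⟨i, ?_⟩
    rw [hi]
    simp only [hG, Matrix.cons_val_zero]
    exact Finset.mem_union_left _ (Finset.mem_image_of_mem _ hw)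
  have hA0 : ∀ u w, u ∈ V 0 → w ∈ (V 0).erase u ∪ V 3 →
      ∃ i : Fin (3 * m), s(u, w) ∈ G ((finProdFinEquiv.symm i).1) ((finProdFinEquiv.symm i).2) := by
    intro u w hu hw
    obtain ⟨k, hk⟩ := hσsurj 0 u hu
    subst hk
    obtain ⟨i, hi⟩ := hF 0 k
    refine ⟨i, ?_⟩
    rw [hi]
    simp only [hG, Matrix.cons_val_zero]
    exact Finset.mem_union_right _ (Finset.mem_image_of_mem _ hw)
  have hB3 : ∀ u w, u ∈ V 3 → w ∈ (V 3).erase u ∪ V 1 →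
      ∃ i : Fin (3 * m), s(u, w) ∈ G ((finProdFinEquiv.symm i).1) ((finProdFinEquiv.symm i).2) := by
    intro u w hu hw
    obtain ⟨k, hk⟩ := hσsurj 3 u hu
    subst hk
    obtain ⟨i, hi⟩ := hF 1 k
    refine ⟨i, ?_⟩
    rw [hi]
    simp only [hG, Matrix.cons_val_one, Matrix.head_cons]
    exact Finset.mem_union_left _ (Finset.mem_image_of_mem _ hw)
  have hB2 : ∀ u w, u ∈ V 2 → w ∈ (V 2).erase u ∪ V 0 →
      ∃ i : Fin (3 * m), s(u, w) ∈ G ((finProdFinEquiv.symm i).1) ((finProdFinEquiv.symm i).2) := by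
    intro u w hu hw
    obtain ⟨k, hk⟩ := hσsurj 2 u hu
    subst hk
    obtain ⟨i, hi⟩ := hF 1 k
    refine ⟨i, ?_⟩
    rw [hi]
    simp only [hG, Matrix.cons_val_one, Matrix.head_cons]
    exact Finset.mem_union_right _ (Finset.mem_image_of_mem _ hw)
  have hC0 : ∀ u w, u ∈ V 0 → w ∈ V 1 →
      ∃ i : Fin (3 * m), s(u, w) ∈ G ((finProdFinEquiv.symm i).1) ((finProdFinEquiv.symm i).2) := by
    intro u w hu hw
    obtain ⟨k, hk⟩ := hσsurj 0 u hu
    subst hk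
    obtain ⟨i, hi⟩ := hF 2 k
    refine ⟨i, ?_⟩
    rw [hi]
    simp only [hG, Matrix.cons_val_two, Matrix.tail_cons, Matrix.head_cons]
    exact Finset.mem_union_left _ (Finset.mem_image_of_mem _ hw)
  have hC2 : ∀ u w, u ∈ V 2 → w ∈ V 3 →
      ∃ i : Fin (3 * m), s(u, w) ∈ G ((finProdFinEquiv.symm i).1) ((finProdFinEquiv.symm i).2) := by
    intro u w hu hw
    obtain ⟨k, hk⟩ := hσsurj 2 u hu
    subst hk
    obtain ⟨i, hi⟩ := hF 2 k
    refine ⟨i, ?_⟩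
    rw [hi]
    simp only [hG, Matrix.cons_val_two, Matrix.tail_cons, Matrix.head_cons]
    exact Finset.mem_union_right _ (Finset.mem_image_of_mem _ hw)
  intro e he
  induction e using Sym2.inductionOn with
  | hf u v =>
    have huv : u ≠ v := by
      simp only [Kedges, Finset.mem_filter, Sym2.mk_isDiag_iff] at he
      exact he.2
    obtain ⟨i, hu⟩ := hunion u
    obtain ⟨j, hv⟩ := hunion v
    have swap : (∃ i : Fin (3 * m),
          s(v, u) ∈ G ((finProdFinEquiv.symm i).1) ((finProdFinEquiv.symm i).2)) →
        ∃ i : Fin (3 * m),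
          s(u, v) ∈ G ((finProdFinEquiv.symm i).1) ((finProdFinEquiv.symm i).2) := by
      intro h
      rw [Sym2.eq_swap]
      exact h
    fin_cases i <;> fin_cases j
    · exact hA0 u v hu (Finset.mem_union_left _ (Finset.mem_erase.mpr ⟨huv.symm, hv⟩))
    · exact hC0 u v hu hv
    · exact swap (hB2 v u hv (Finset.mem_union_right _ hu))
    · exact hA0 u v hu (Finset.mem_union_right _ hv)
    · exact swap (hC0 v u hv hu)
    · exact hA1 u v hu (Finset.mem_union_left _ (Finset.mem_erase.mpr ⟨huv.symm, hv⟩))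
    · exact hA1 u v hu (Finset.mem_union_right _ hv)
    · exact swap (hB3 v u hv (Finset.mem_union_right _ hu))
    · exact hB2 u v hu (Finset.mem_union_right _ hv)
    · exact swap (hA1 v u hv (Finset.mem_union_right _ hu))
    · exact hB2 u v hu (Finset.mem_union_left _ (Finset.mem_erase.mpr ⟨huv.symm, hv⟩))
    · exact hC2 u v hu hv
    · exact swap (hA0 v u hv (Finset.mem_union_right _ hu))
    · exact hB3 u v hu (Finset.mem_union_right _ hv)
    · exact swap (hC2 v u hv hu)
    · exact hB3 u v hu (Finset.mem_union_left _ (Finset.mem_erase.mpr ⟨huv.symm, hv⟩))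
end

section
/- If every 2-star-forest in a covering of K_n (n ≥ 5) has two centers, and the covering uses t 2-star-forests, then t ≥ ⌈3n/4⌉; moreover if some 2-star-forest in a minimal covering has only one center, removing that center and that forest yields a covering of K_{n-1} by t-1 2-star-forests. -/
/-- the center set function -/
def Dset {n t : ℕ} (a b : Fin t → Fin n) (v : Fin n) : Finset (Fin t) :=
  Finset.univ.filter (fun i => a i = v ∨ b i = v)

lemma center_edge_notMem {n : ℕ} {E : Finset (Sym2 (Fin n))} {a b : Fin n}
    (hab : a ≠ b) (h : IsTwoStar E a b) : s(a, b) ∉ E := by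
  obtain ⟨c, ⟨hmem, hstar⟩, hctr, ⟨ea, hea, hcea⟩, ⟨eb, heb, hceb⟩⟩ := h
  intro hE
  have h1 : c s(a, b) ∈ s(a, b) := hmem _ hE
  rw [Sym2.mem_iff] at h1
  rcases h1 with h1 | h1
  · have hne : s(a, b) ≠ eb := by
      intro he
      rw [← he] at hceb
      exact hab (h1 ▸ hceb)
    have hbeb : b ∈ eb := hceb ▸ hmem eb heb
    have := hstar _ hE eb heb hne b (Sym2.mem_mk_right a b) hbeb
    exact hab (h1 ▸ this)
  · have hne : s(a, b) ≠ ea := by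
      intro he
      rw [← he] at hcea
      exact hab (hcea ▸ h1)
    have haea : a ∈ ea := hcea ▸ hmem ea hea
    have := hstar _ hE ea hea hne a (Sym2.mem_mk_left a b) haea
    exact hab (this ▸ h1)

lemma lower_bound (n : ℕ) (hn : 5 ≤ n) (t : ℕ) (F : Fin t → Finset (Sym2 (Fin n)))
    (a b : Fin t → Fin n) (hab : ∀ i, a i ≠ b i)
    (hts : ∀ i, IsTwoStar (F i) (a i) (b i))
    (hcov : ∀ e ∈ Kedges n, ∃ i, e ∈ F i) :
    (3 * n + 3) / 4 ≤ t := by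
  classical
  -- choose the center functions
  choose cc hccspec using hts
  have hmem : ∀ i, ∀ e ∈ F i, cc i e ∈ e := fun i => (hccspec i).1.1
  have hstar : ∀ i, ∀ e ∈ F i, ∀ f ∈ F i, e ≠ f → ∀ v : Fin n, v ∈ e → v ∈ f → cc i e = v :=
    fun i => (hccspec i).1.2
  have hctr : ∀ i, ∀ e ∈ F i, cc i e = a i ∨ cc i e = b i := fun i => (hccspec i).2.1
  have hnce : ∀ i, s(a i, b i) ∉ F i := fun i =>
    center_edge_notMem (hab i) ⟨cc i, (hccspec i).1, (hccspec i).2.1, (hccspec i).2.2⟩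
  -- coverage of an arbitrary edge
  have hKe : ∀ u w : Fin n, u ≠ w → s(u, w) ∈ Kedges n := by
    intro u w huw
    simp only [Kedges, Finset.mem_filter, Finset.mem_univ, true_and, Sym2.mk_isDiag_iff]
    exact huw
  -- total count
  have hsum : ∑ v : Fin n, (Dset a b v).card = 2 * t := by
    have h1 : ∑ v : Fin n, (Dset a b v).card
        = ∑ v : Fin n, ∑ i : Fin t, (if a i = v ∨ b i = v then 1 else 0) := by
      refine Finset.sum_congr rfl fun v _ => ?_
      rw [Dset, Finset.card_filter]
    rw [h1, Finset.sum_comm]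
    have h2 : ∀ i : Fin t, ∑ v : Fin n, (if a i = v ∨ b i = v then 1 else 0) = 2 := by
      intro i
      rw [← Finset.card_filter]
      have h3 : Finset.univ.filter (fun v => a i = v ∨ b i = v) = {a i, b i} := by
        ext v
        simp only [Finset.mem_filter, Finset.mem_univ, true_and, Finset.mem_insert,
          Finset.mem_singleton]
        exact ⟨fun h => h.imp Eq.symm Eq.symm, fun h => h.imp Eq.symm Eq.symm⟩
      rw [h3, Finset.card_pair (hab i)]
    rw [Finset.sum_congr rfl fun i _ => h2 i]
    simp [Finset.card_univ, Nat.mul_comm]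
  by_cases hz : ∃ w, (Dset a b w).card = 0
  · -- some vertex is never a center: t ≥ n - 1
    obtain ⟨w, hw⟩ := hz
    have hwnc : ∀ i : Fin t, ¬(a i = w ∨ b i = w) := by
      intro i hi
      have : i ∈ Dset a b w := Finset.mem_filter.mpr ⟨Finset.mem_univ _, hi⟩
      rw [Finset.card_eq_zero.mp hw] at this
      exact absurd this (Finset.notMem_empty i)
    have hcov' : ∀ u : Fin n, u ≠ w → ∃ i, s(w, u) ∈ F i := by
      intro u hu
      exact hcov _ (hKe w u (fun h => hu h.symm))
    have hnt : Nontrivial (Fin n) :=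
      ⟨⟨0, by omega⟩, ⟨1, by omega⟩, by simp [Fin.ext_iff]⟩
    obtain ⟨u₀, hu₀⟩ := exists_ne w
    obtain ⟨i₁, _⟩ := hcov' u₀ hu₀
    set g : Fin n → Fin t := fun u => if h : u = w then i₁ else (hcov' u h).choose with hg
    have hgspec : ∀ u : Fin n, u ≠ w → s(w, u) ∈ F (g u) := by
      intro u hu
      rw [hg]
      simp only [dif_neg hu]
      exact (hcov' u hu).choose_spec
    have hinj : Set.InjOn g (Finset.univ.erase w : Finset (Fin n)) := by
      intro u hu u' hu' hgu
      have hu1 : u ≠ w := (Finset.mem_erase.mp (Finset.mem_coe.mp hu)).1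
      have hu2 : u' ≠ w := (Finset.mem_erase.mp (Finset.mem_coe.mp hu')).1
      by_contra hne
      have h1 := hgspec u hu1
      have h2 := hgspec u' hu2
      rw [hgu] at h1
      have hef : s(w, u) ≠ s(w, u') := by
        intro h
        rcases Sym2.eq_iff.mp h with ⟨_, h2⟩ | ⟨h2, _⟩
        · exact hne h2
        · exact hu2 h2.symm
      have := hstar (g u') _ h1 _ h2 hef w (Sym2.mem_mk_left w u) (Sym2.mem_mk_left w u')
      have hcc := hctr (g u') _ h1
      rw [this] at hcc
      exact hwnc (g u') (hcc.imp Eq.symm Eq.symm)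
    have hle : (Finset.univ.erase w).card ≤ (Finset.univ : Finset (Fin t)).card :=
      Finset.card_le_card_of_injOn g (fun _ _ => Finset.mem_univ _) hinj
    rw [Finset.card_erase_of_mem (Finset.mem_univ w)] at hle
    simp only [Finset.card_univ, Fintype.card_fin] at hle
    omega
  · push_neg at hz
    have hall : ∀ v, 1 ≤ (Dset a b v).card := fun v => Nat.one_le_iff_ne_zero.mpr (hz v)
    set it : Fin n → Fin t := fun v => (Dset a b v).min' (Finset.card_pos.mp (hall v)) with hit
    have hitmem : ∀ v, it v ∈ Dset a b v := fun v => Finset.min'_mem _ _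
    set pt : Fin n → Fin n := fun v => if a (it v) = v then b (it v) else a (it v) with hptdef
    have hsingle : ∀ v, (Dset a b v).card = 1 → Dset a b v = {it v} := by
      intro v h
      obtain ⟨x, hx⟩ := Finset.card_eq_one.mp h
      have hm := hitmem v
      rw [hx] at hm ⊢
      rw [Finset.mem_singleton.mp hm]
    have hpt : ∀ v, (a (it v) = v ∧ b (it v) = pt v) ∨ (b (it v) = v ∧ a (it v) = pt v) := by
      intro v
      have hm := hitmem v
      simp only [Dset, Finset.mem_filter, Finset.mem_univ, true_and] at hm
      rcases hm with h1 | h1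
      · left
        exact ⟨h1, by rw [hptdef]; simp only [if_pos h1]⟩
      · by_cases h2 : a (it v) = v
        · left; exact ⟨h2, by rw [hptdef]; simp only [if_pos h2]⟩
        · right; exact ⟨h1, by rw [hptdef]; simp only [if_neg h2]⟩
    have hvnep : ∀ v, v ≠ pt v := by
      intro v
      rcases hpt v with ⟨h1, h2⟩ | ⟨h1, h2⟩
      · exact fun heq => hab (it v) (h1.trans (heq.trans h2.symm))
      · exact fun heq => hab (it v) ((h2.trans heq.symm).trans h1.symm)
    have hptD : ∀ v, it v ∈ Dset a b (pt v) := by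
      intro v
      refine Finset.mem_filter.mpr ⟨Finset.mem_univ _, ?_⟩
      rcases hpt v with ⟨_, h2⟩ | ⟨_, h2⟩
      · right; exact h2
      · left; exact h2
    -- key lemma A: second center appearance for the partner
    have keyA : ∀ v : Fin n, (Dset a b v).card = 1 →
        ∃ j, j ≠ it v ∧ j ∈ Dset a b (pt v) ∧ s(pt v, v) ∈ F j ∧ cc j s(pt v, v) = pt v := by
      intro v hv1
      have hvp : v ≠ pt v := hvnep v
      obtain ⟨j, hj⟩ := hcov _ (hKe (pt v) v (fun h => hvp h.symm))
      have hcj : cc j s(pt v, v) ∈ s(pt v, v) := hmem j _ hj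
      rw [Sym2.mem_iff] at hcj
      have hcenterEdge : s(pt v, v) = s(a (it v), b (it v)) := by
        rcases hpt v with ⟨h1, h2⟩ | ⟨h1, h2⟩
        · rw [h1, h2]; exact Sym2.eq_swap
        · rw [h1, h2]
      rcases hcj with hcp | hcv
      · have hcc := hctr j _ hj
        have hjD : j ∈ Dset a b (pt v) := by
          refine Finset.mem_filter.mpr ⟨Finset.mem_univ _, ?_⟩
          rcases hcc with h | h
          · left; rw [← h, hcp]
          · right; rw [← h, hcp]
        have hji : j ≠ it v := by
          intro hj'
          rw [hj', hcenterEdge] at hj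
          exact hnce _ hj
        exact ⟨j, hji, hjD, hj, hcp⟩
      · exfalso
        have hcc := hctr j _ hj
        have hjD : j ∈ Dset a b v := by
          refine Finset.mem_filter.mpr ⟨Finset.mem_univ _, ?_⟩
          rcases hcc with h | h
          · left; rw [← h, hcv]
          · right; rw [← h, hcv]
        rw [hsingle v hv1, Finset.mem_singleton] at hjD
        rw [hjD, hcenterEdge] at hj
        exact hnce _ hj
    -- distinct fibers use distinct forests
    have hitinj : ∀ v v' : Fin n, v ≠ v' → pt v = pt v' → it v ≠ it v' := by
      intro v v' hvv' hpp hii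
      rcases hpt v with ⟨x1, x2⟩ | ⟨x1, x2⟩ <;> rcases hpt v' with ⟨y1, y2⟩ | ⟨y1, y2⟩
      · exact hvv' (by rw [← x1, ← y1, hii])
      · exact hab (it v) (by rw [x2, hpp, ← y2, hii])
      · exact hab (it v) (by rw [x2, hpp, ← y2, hii])
      · exact hvv' (by rw [← x1, ← y1, hii])
    -- the m = 2 case contradiction
    have key3 : ∀ v v' : Fin n, v ≠ v' → (Dset a b v).card = 1 → (Dset a b v').card = 1 →
        pt v = pt v' → (Dset a b (pt v)).card ≤ 2 → False := by
      intro v v' hvv' hv1 hv'1 hpp hc2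
      have hii : it v ≠ it v' := hitinj v v' hvv' hpp
      have hiD : it v ∈ Dset a b (pt v) := hptD v
      have hi'D : it v' ∈ Dset a b (pt v) := by rw [hpp]; exact hptD v'
      have hpair : ({it v, it v'} : Finset (Fin t)) ⊆ Dset a b (pt v) := by
        intro x hx
        rcases Finset.mem_insert.mp hx with rfl | hx
        · exact hiD
        · rw [Finset.mem_singleton.mp hx]; exact hi'D
      have hDp : Dset a b (pt v) = {it v, it v'} :=
        (Finset.eq_of_subset_of_card_le hpair (by rw [Finset.card_pair hii]; exact hc2)).symm
      obtain ⟨j, hji, hjD, hjF, hjc⟩ := keyA v hv1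
      have hjeq : j = it v' := by
        rw [hDp] at hjD
        rcases Finset.mem_insert.mp hjD with h | h
        · exact absurd h hji
        · exact Finset.mem_singleton.mp h
      obtain ⟨j', hji', hjD', hjF', hjc'⟩ := keyA v' hv'1
      have hjeq' : j' = it v := by
        rw [← hpp, hDp] at hjD'
        rcases Finset.mem_insert.mp hjD' with h | h
        · exact h
        · exact absurd (Finset.mem_singleton.mp h) hji'
      rw [hjeq] at hjF hjc
      rw [hjeq', ← hpp] at hjF' hjc'
      -- now cover edge (v, v')
      obtain ⟨k, hk⟩ := hcov _ (hKe v v' hvv')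
      have hck : cc k s(v, v') ∈ s(v, v') := hmem k _ hk
      rw [Sym2.mem_iff] at hck
      have hvp : v ≠ pt v := hvnep v
      have hv'p : v' ≠ pt v := by rw [hpp]; exact hvnep v'
      rcases hck with hcv | hcv'
      · -- center is v, so k = it v
        have hcc := hctr k _ hk
        have hkD : k ∈ Dset a b v := by
          refine Finset.mem_filter.mpr ⟨Finset.mem_univ _, ?_⟩
          rcases hcc with h | h
          · left; rw [← h, hcv]
          · right; rw [← h, hcv]
        rw [hsingle v hv1, Finset.mem_singleton] at hkD
        subst hkD
        have hef : s(v, v') ≠ s(pt v, v') := by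
          intro h
          rcases Sym2.eq_iff.mp h with ⟨h2, _⟩ | ⟨h2, _⟩
          · exact hvp h2
          · exact hvv' h2
        have := hstar (it v) _ hk _ hjF' hef v' (Sym2.mem_mk_right v v') (Sym2.mem_mk_right (pt v) v')
        rw [hcv] at this
        exact hvv' this
      · have hcc := hctr k _ hk
        have hkD : k ∈ Dset a b v' := by
          refine Finset.mem_filter.mpr ⟨Finset.mem_univ _, ?_⟩
          rcases hcc with h | h
          · left; rw [← h, hcv']
          · right; rw [← h, hcv']
        rw [hsingle v' hv'1, Finset.mem_singleton] at hkD
        subst hkD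
        have hef : s(v, v') ≠ s(pt v, v) := by
          intro h
          rcases Sym2.eq_iff.mp h with ⟨h2, _⟩ | ⟨_, h3⟩
          · exact hvp h2
          · exact hv'p h3
        have := hstar (it v') _ hk _ hjF hef v (Sym2.mem_mk_left v v') (Sym2.mem_mk_right (pt v) v)
        rw [hcv'] at this
        exact hvv' this.symm
    -- counting
    set B : Finset (Fin n) := Finset.univ.filter (fun v => (Dset a b v).card = 1) with hBdef
    set P : Finset (Fin n) := B.image pt with hPdef
    have hBmem : ∀ v ∈ B, (Dset a b v).card = 1 := fun v hv => (Finset.mem_filter.mp hv).2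
    have hptP : ∀ v ∈ B, pt v ∈ P := fun v hv => Finset.mem_image_of_mem _ hv
    have hP2 : ∀ p ∈ P, 2 ≤ (Dset a b p).card := by
      intro p hp
      obtain ⟨v, hvB, rfl⟩ := Finset.mem_image.mp hp
      obtain ⟨j, hji, hjD, _, _⟩ := keyA v (hBmem v hvB)
      have hpair : ({j, it v} : Finset (Fin t)) ⊆ Dset a b (pt v) := by
        intro x hx
        rcases Finset.mem_insert.mp hx with rfl | hx
        · exact hjD
        · rw [Finset.mem_singleton.mp hx]; exact hptD v
      calc 2 = ({j, it v} : Finset (Fin t)).card := (Finset.card_pair hji).symm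
        _ ≤ _ := Finset.card_le_card hpair
    have hdisj : Disjoint B P := by
      rw [Finset.disjoint_left]
      intro v hvB hvP
      have h1 := hBmem v hvB
      have h2 := hP2 v hvP
      omega
    have hfib : B.card = ∑ p ∈ P, (B.filter (fun v => pt v = p)).card :=
      Finset.card_eq_sum_card_fiberwise hptP
    have hper : ∀ p ∈ P, (B.filter (fun v => pt v = p)).card + 3 ≤ 2 * (Dset a b p).card := by
      intro p hp
      have hmle : (B.filter (fun v => pt v = p)).card ≤ (Dset a b p).card := by
        refine Finset.card_le_card_of_injOn it ?_ ?_
        · intro v hv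
          obtain ⟨hvB, hvp⟩ := Finset.mem_filter.mp hv
          exact hvp ▸ hptD v
        · intro v hv v' hv' hii
          obtain ⟨hvB, hvp⟩ := Finset.mem_filter.mp (Finset.mem_coe.mp hv)
          obtain ⟨hv'B, hv'p⟩ := Finset.mem_filter.mp (Finset.mem_coe.mp hv')
          by_contra hne
          exact hitinj v v' hne (hvp.trans hv'p.symm) hii
      have h2 := hP2 p hp
      by_cases hm2 : (B.filter (fun v => pt v = p)).card = 2
      · have h3 : 3 ≤ (Dset a b p).card := by
          by_contra hlt
          push_neg at hlt
          obtain ⟨v, v', hne, hvv'⟩ := Finset.card_eq_two.mp hm2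
          have hvmem : v ∈ B.filter (fun v => pt v = p) := by rw [hvv']; simp
          have hv'mem : v' ∈ B.filter (fun v => pt v = p) := by rw [hvv']; simp
          obtain ⟨hvB, hvp⟩ := Finset.mem_filter.mp hvmem
          obtain ⟨hv'B, hv'p⟩ := Finset.mem_filter.mp hv'mem
          exact key3 v v' hne (hBmem v hvB) (hBmem v' hv'B) (hvp.trans hv'p.symm)
            (by rw [hvp]; omega)
        omega
      · omega
    -- assemble
    set R : Finset (Fin n) := Finset.univ \ (B ∪ P) with hRdef
    have hsplit : ∑ v : Fin n, (Dset a b v).card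
        = (∑ v ∈ R, (Dset a b v).card) + ((∑ v ∈ B, (Dset a b v).card) + ∑ v ∈ P, (Dset a b v).card) := by
      rw [← Finset.sum_union hdisj, hRdef, Finset.sum_sdiff (Finset.subset_univ _)]
    have hBsum : ∑ v ∈ B, (Dset a b v).card = B.card := by
      rw [Finset.card_eq_sum_ones]
      exact Finset.sum_congr rfl fun v hv => hBmem v hv
    have hPsum : B.card + 3 * P.card ≤ 2 * ∑ p ∈ P, (Dset a b p).card := by
      calc B.card + 3 * P.card
          = ∑ p ∈ P, (B.filter (fun v => pt v = p)).card + ∑ p ∈ P, 3 := by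
            rw [← hfib, Finset.sum_const, smul_eq_mul, Nat.mul_comm]
        _ = ∑ p ∈ P, ((B.filter (fun v => pt v = p)).card + 3) := by
            rw [Finset.sum_add_distrib]
        _ ≤ ∑ p ∈ P, 2 * (Dset a b p).card := Finset.sum_le_sum hper
        _ = 2 * ∑ p ∈ P, (Dset a b p).card := by rw [Finset.mul_sum]
    have hRsum : 2 * R.card ≤ ∑ v ∈ R, (Dset a b v).card := by
      calc 2 * R.card = ∑ _v ∈ R, 2 := by rw [Finset.sum_const, smul_eq_mul, Nat.mul_comm]
        _ ≤ _ := by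
            refine Finset.sum_le_sum fun v hv => ?_
            have hvB : v ∉ B := by
              intro hvB
              have : v ∈ B ∪ P := Finset.mem_union_left _ hvB
              rw [hRdef] at hv
              exact (Finset.mem_sdiff.mp hv).2 this
            have h1 := hall v
            have h2 : (Dset a b v).card ≠ 1 := by
              intro h
              exact hvB (Finset.mem_filter.mpr ⟨Finset.mem_univ _, h⟩)
            omega
    have hcard : B.card + P.card + R.card = n := by
      have h1 : (B ∪ P).card = B.card + P.card := Finset.card_union_of_disjoint hdisj
      have h2 : R.card = n - (B ∪ P).card := by
        rw [hRdef, Finset.card_sdiff_of_subset (Finset.subset_univ _), Finset.card_univ, Fintype.card_fin]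
      have h3 : (B ∪ P).card ≤ n := by
        calc (B ∪ P).card ≤ (Finset.univ : Finset (Fin n)).card := Finset.card_le_card (Finset.subset_univ _)
          _ = n := by rw [Finset.card_univ, Fintype.card_fin]
      omega
    omega

lemma ksf_subset {n k : ℕ} {E E' : Finset (Sym2 (Fin n))} (h : E' ⊆ E)
    (hk : IsKStarForest E k) : IsKStarForest E' k := by
  obtain ⟨c, ⟨h1, h2⟩, h3⟩ := hk
  exact ⟨c, ⟨fun e he => h1 e (h he), fun e he f hf => h2 e (h he) f (h hf)⟩,
    le_trans (Finset.card_le_card (Finset.image_subset_image h)) h3⟩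

lemma remove_center (n : ℕ) (t : ℕ) (F : Fin t → Finset (Sym2 (Fin n)))
    (h2 : ∀ i, IsKStarForest (F i) 2) (hsub : ∀ i, F i ⊆ Kedges n)
    (hcov : ∀ e ∈ Kedges n, ∃ i, e ∈ F i)
    (i₀ : Fin t) (v : Fin n) (hv : ∀ e ∈ F i₀, v ∈ e) :
    ∃ G : Fin (t - 1) → Finset (Sym2 (Fin n)),
      (∀ j, IsKStarForest (G j) 2 ∧ G j ⊆ Kedges n ∧ ∀ e ∈ G j, v ∉ e) ∧
      ∀ e ∈ Kedges n, v ∉ e → ∃ j, e ∈ G j := by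
  classical
  have hi₀ := i₀.isLt
  set emb : Fin (t - 1) → Fin t := fun j =>
    if h : (j : ℕ) < (i₀ : ℕ) then ⟨j, by omega⟩
    else ⟨(j : ℕ) + 1, by have := j.isLt; omega⟩ with hembdef
  have hval : ∀ j : Fin (t - 1),
      (emb j : ℕ) = if (j : ℕ) < (i₀ : ℕ) then (j : ℕ) else (j : ℕ) + 1 := by
    intro j
    rw [hembdef]
    by_cases h : (j : ℕ) < (i₀ : ℕ)
    · simp only [dif_pos h, if_pos h]
    · simp only [dif_neg h, if_neg h]
  have hsurj : ∀ i : Fin t, i ≠ i₀ → ∃ j, emb j = i := by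
    intro i hi
    have hvi : (i : ℕ) ≠ (i₀ : ℕ) := fun h => hi (Fin.ext h)
    have hilt := i.isLt
    by_cases hlt : (i : ℕ) < (i₀ : ℕ)
    · refine ⟨⟨(i : ℕ), by omega⟩, Fin.ext ?_⟩
      rw [hval]
      simp only [if_pos hlt]
    · refine ⟨⟨(i : ℕ) - 1, by omega⟩, Fin.ext ?_⟩
      rw [hval]
      have hc : ¬ (((i : ℕ) - 1) < (i₀ : ℕ)) := by omega
      rw [if_neg hc]
      show (i : ℕ) - 1 + 1 = (i : ℕ)
      omega
  refine ⟨fun j => (F (emb j)).filter (fun e => v ∉ e), fun j => ?_, ?_⟩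
  · refine ⟨ksf_subset (Finset.filter_subset _ _) (h2 (emb j)), ?_, ?_⟩
    · exact (Finset.filter_subset _ _).trans (hsub (emb j))
    · intro e he
      exact (Finset.mem_filter.mp he).2
  · intro e he hve
    obtain ⟨i, hei⟩ := hcov e he
    have hii₀ : i ≠ i₀ := fun h => hve (hv e (h ▸ hei))
    obtain ⟨j, rfl⟩ := hsurj i hii₀
    exact ⟨j, Finset.mem_filter.mpr ⟨hei, hve⟩⟩

/-- (i) if K_n (n ≥ 5) is covered by t 2-star-forests each having two
designated centers, then t ≥ ⌈3n/4⌉; (ii) if some 2-star-forest in a covering is a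
single star with center v, removing v and that forest yields a covering of the
complete graph on the remaining n-1 vertices by t-1 2-star-forests. -/
theorem stmt19 (n : ℕ) (hn : 5 ≤ n) :
    (∀ (t : ℕ) (F : Fin t → Finset (Sym2 (Fin n))) (a b : Fin t → Fin n),
      (∀ i, a i ≠ b i) → (∀ i, IsTwoStar (F i) (a i) (b i)) →
      (∀ i, F i ⊆ Kedges n) → (∀ e ∈ Kedges n, ∃ i, e ∈ F i) →
      (3 * n + 3) / 4 ≤ t) ∧
    (∀ (t : ℕ) (F : Fin t → Finset (Sym2 (Fin n))),
      (∀ i, IsKStarForest (F i) 2) → (∀ i, F i ⊆ Kedges n) →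
      (∀ e ∈ Kedges n, ∃ i, e ∈ F i) →
      ∀ (i₀ : Fin t) (v : Fin n), (∀ e ∈ F i₀, v ∈ e) →
      ∃ G : Fin (t - 1) → Finset (Sym2 (Fin n)),
        (∀ j, IsKStarForest (G j) 2 ∧ G j ⊆ Kedges n ∧ ∀ e ∈ G j, v ∉ e) ∧
        ∀ e ∈ Kedges n, v ∉ e → ∃ j, e ∈ G j) := by
  exact ⟨fun t F a b hab hts hsub hcov => lower_bound n hn t F a b hab hts hcov,
    fun t F h2 hsub hcov i₀ v hv => remove_center n t F h2 hsub hcov i₀ v hv⟩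
end
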